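/- arXiv:1204.5070 — 11 statements merged into one kernel-verified Lean document; each statement's English description precedes it below -/
import Mathlib

section
/- For every integer n with 1 ≤ n ≤ N−1 the quantities x_n, y_n satisfy the coupled discrete system cN·(x_n + y_n)(x_{n+1} + y_n) = −y_n(N+1+N y_n)(N+1−α+N y_n) and N(N x_n − n)·(x_n + y_n)(x_n + y_{n−1}) = x_n(−N−1+N x_n)(α−N−1+N x_n); the first equation also holds for n = 0, and N x_n − n = a_n²/c > 0 for 1 ≤ n ≤ N. -/
open Polynomial Finset

namespace GKaux

noncomputable section

structure Ctx where
  N : ℕ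
  α : ℝ
  c : ℝ
  w : ℕ → ℝ
  p : ℕ → Polynomial ℝ
  a : ℕ → ℝ
  b : ℕ → ℝ
  hN : 1 ≤ N
  hα : α < 1
  hc : 0 < c
  hw : ∀ k, k ≤ N →
      w k = (N.choose k : ℝ) * c ^ k / ∏ j ∈ Finset.range k, (1 - α + (j : ℝ))
  hdeg : ∀ n, n ≤ N → (p n).natDegree = n
  hlead : ∀ n, n ≤ N → 0 < (p n).leadingCoeff
  horth : ∀ m, m ≤ N → ∀ n, n ≤ N →
      ∑ k ∈ Finset.range (N + 1), (p m).eval (k : ℝ) * (p n).eval (k : ℝ) * w k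
        = if m = n then 1 else 0
  ha0 : a 0 = 0
  ha : ∀ n, 1 ≤ n → n ≤ N →
      a n = ∑ k ∈ Finset.range (N + 1),
        (k : ℝ) * (p n).eval (k : ℝ) * (p (n - 1)).eval (k : ℝ) * w k
  hb : ∀ n, n ≤ N →
      b n = ∑ k ∈ Finset.range (N + 1), (k : ℝ) * ((p n).eval (k : ℝ)) ^ 2 * w k

variable (Γ : Ctx)

/-- inner product -/
def Ctx.ip (f g : Polynomial ℝ) : ℝ :=
  ∑ k ∈ Finset.range (Γ.N + 1), f.eval (k : ℝ) * g.eval (k : ℝ) * Γ.w k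

def Ctx.κ (m : ℕ) : ℝ := (Γ.p m).leadingCoeff

lemma Ctx.prodpos (k : ℕ) : 0 < ∏ j ∈ Finset.range k, (1 - Γ.α + (j : ℝ)) := by
  apply Finset.prod_pos
  intro j _
  have := Γ.hα
  have : (0:ℝ) ≤ (j:ℝ) := Nat.cast_nonneg j
  linarith [Γ.hα]

lemma Ctx.wpos (k : ℕ) (hk : k ≤ Γ.N) : 0 < Γ.w k := by
  rw [Γ.hw k hk]
  apply div_pos
  · apply mul_pos
    · exact_mod_cast Nat.cast_pos.mpr (Nat.choose_pos hk)
    · exact pow_pos Γ.hc k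
  · exact Γ.prodpos k

lemma Ctx.ip_comm (f g : Polynomial ℝ) : Γ.ip f g = Γ.ip g f := by
  unfold Ctx.ip; apply Finset.sum_congr rfl; intro k _; ring

lemma Ctx.ip_add_left (f g h : Polynomial ℝ) : Γ.ip (f + g) h = Γ.ip f h + Γ.ip g h := by
  unfold Ctx.ip; rw [← Finset.sum_add_distrib]
  apply Finset.sum_congr rfl; intro k _; simp [eval_add]; ring

lemma Ctx.ip_sub_left (f g h : Polynomial ℝ) : Γ.ip (f - g) h = Γ.ip f h - Γ.ip g h := by
  unfold Ctx.ip; rw [← Finset.sum_sub_distrib]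
  apply Finset.sum_congr rfl; intro k _; simp [eval_sub]; ring

lemma Ctx.ip_smul_left (r : ℝ) (f h : Polynomial ℝ) : Γ.ip (r • f) h = r * Γ.ip f h := by
  unfold Ctx.ip; rw [Finset.mul_sum]
  apply Finset.sum_congr rfl; intro k _; simp [eval_smul]; ring

lemma Ctx.ip_add_right (f g h : Polynomial ℝ) : Γ.ip f (g + h) = Γ.ip f g + Γ.ip f h := by
  rw [Γ.ip_comm f (g+h), Γ.ip_add_left, Γ.ip_comm g f, Γ.ip_comm h f]

lemma Ctx.ip_smul_right (r : ℝ) (f h : Polynomial ℝ) : Γ.ip f (r • h) = r * Γ.ip f h := by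
  rw [Γ.ip_comm f (r • h), Γ.ip_smul_left, Γ.ip_comm h f]

lemma Ctx.ip_zero_left (h : Polynomial ℝ) : Γ.ip 0 h = 0 := by
  unfold Ctx.ip; apply Finset.sum_eq_zero; intro k _; simp

lemma Ctx.horth' (m n : ℕ) (hm : m ≤ Γ.N) (hn : n ≤ Γ.N) :
    Γ.ip (Γ.p m) (Γ.p n) = if m = n then 1 else 0 := Γ.horth m hm n hn

lemma Ctx.κpos (m : ℕ) (hm : m ≤ Γ.N) : 0 < Γ.κ m := Γ.hlead m hm

lemma Ctx.κne (m : ℕ) (hm : m ≤ Γ.N) : Γ.κ m ≠ 0 := ne_of_gt (Γ.κpos m hm)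

lemma Ctx.pne0 (m : ℕ) (hm : m ≤ Γ.N) : Γ.p m ≠ 0 := by
  intro h
  have := Γ.κpos m hm
  rw [Ctx.κ, h] at this
  simp at this

/-- low degree polys are orthogonal to p m -/
lemma Ctx.low_orth : ∀ d : ℕ, ∀ s : Polynomial ℝ, s.natDegree ≤ d → ∀ m, d < m → m ≤ Γ.N →
    Γ.ip s (Γ.p m) = 0 := by
  intro d
  induction d with
  | zero =>
    intro s hs m hdm hm
    have hs' : s = C (s.coeff 0) := Polynomial.eq_C_of_natDegree_le_zero hs
    have hp0 : Γ.p 0 = C ((Γ.p 0).coeff 0) := by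
      apply Polynomial.eq_C_of_natDegree_le_zero
      rw [Γ.hdeg 0 (by omega)]
    have hκ : Γ.κ 0 = (Γ.p 0).coeff 0 := by
      rw [Ctx.κ, Polynomial.leadingCoeff, Γ.hdeg 0 (by omega)]
    have : s = (s.coeff 0 / Γ.κ 0) • Γ.p 0 := by
      rw [hκ]
      nth_rewrite 1 [hs']
      nth_rewrite 2 [hp0]
      rw [Polynomial.smul_C]
      congr 1
      field_simp
      have h0 : (Γ.p 0).coeff 0 ≠ 0 := by rw [← hκ]; exact Γ.κne 0 (by omega)
      rw [smul_eq_mul, div_mul_cancel₀ _ h0]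
    rw [this, Γ.ip_smul_left, Γ.horth' 0 m (by omega) hm]
    have : ¬ (0 = m) := by omega
    simp [this]
  | succ d ih =>
    intro s hs m hdm hm
    set γ := s.coeff (d+1) / Γ.κ (d+1) with hγ
    have hdN : d + 1 ≤ Γ.N := by omega
    set s' := s - γ • Γ.p (d+1) with hs'
    have hdeg' : s'.natDegree ≤ d := by
      rw [Polynomial.natDegree_le_iff_coeff_eq_zero]
      intro i hi
      rw [hs', Polynomial.coeff_sub, Polynomial.coeff_smul]
      rcases Nat.lt_or_ge (d+1) i with h | h
      · rw [Polynomial.coeff_eq_zero_of_natDegree_lt (by omega : s.natDegree < i),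
          Polynomial.coeff_eq_zero_of_natDegree_lt]
        · simp
        · rw [Γ.hdeg (d+1) hdN]; omega
      · have hi' : i = d + 1 := by omega
        subst hi'
        have : (Γ.p (d+1)).coeff (d+1) = Γ.κ (d+1) := by
          rw [Ctx.κ, Polynomial.leadingCoeff, Γ.hdeg (d+1) hdN]
        rw [this, hγ, smul_eq_mul]
        field_simp [Γ.κne (d+1) hdN]
        ring
    have : Γ.ip s (Γ.p m) = Γ.ip s' (Γ.p m) + γ * Γ.ip (Γ.p (d+1)) (Γ.p m) := by
      rw [hs', Γ.ip_sub_left, Γ.ip_smul_left]; ring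
    rw [this, ih s' hdeg' m (by omega) hm, Γ.horth' (d+1) m hdN hm]
    simp
    intro h; omega

/-- projection formula -/
lemma Ctx.proj (s : Polynomial ℝ) (m : ℕ) (hm : m ≤ Γ.N) (hs : s.natDegree ≤ m) :
    Γ.ip s (Γ.p m) = s.coeff m / Γ.κ m := by
  set γ := s.coeff m / Γ.κ m with hγ
  set s' := s - γ • Γ.p m with hs'
  have hcoeff : s'.coeff m = 0 := by
    rw [hs', Polynomial.coeff_sub, Polynomial.coeff_smul]
    have : (Γ.p m).coeff m = Γ.κ m := by
      rw [Ctx.κ, Polynomial.leadingCoeff, Γ.hdeg m hm]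
    rw [this, hγ, smul_eq_mul]
    field_simp [Γ.κne m hm]
    ring
  have hips' : Γ.ip s' (Γ.p m) = 0 := by
    rcases Nat.eq_zero_or_pos m with h0 | hpos
    · subst h0
      have : s' = 0 := by
        have h1 : s'.natDegree ≤ 0 := by
          apply le_trans (Polynomial.natDegree_sub_le _ _)
          apply max_le hs
          exact le_trans (Polynomial.natDegree_smul_le _ _) (le_of_eq (Γ.hdeg 0 (by omega)))
        have := Polynomial.eq_C_of_natDegree_le_zero h1
        rw [this, hcoeff]; simp
      rw [this, Γ.ip_zero_left]
    · apply Γ.low_orth (m-1) s' _ m (by omega) hm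
      rw [Polynomial.natDegree_le_iff_coeff_eq_zero]
      intro i hi
      rcases Nat.lt_or_ge m i with h | h
      · rw [hs', Polynomial.coeff_sub, Polynomial.coeff_smul,
          Polynomial.coeff_eq_zero_of_natDegree_lt (by omega : s.natDegree < i),
          Polynomial.coeff_eq_zero_of_natDegree_lt]
        · simp
        · rw [Γ.hdeg m hm]; omega
      · have : i = m := by omega
        subst this; exact hcoeff
  have : Γ.ip s (Γ.p m) = Γ.ip s' (Γ.p m) + γ * Γ.ip (Γ.p m) (Γ.p m) := by
    rw [hs', Γ.ip_sub_left, Γ.ip_smul_left]; ring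
  rw [this, hips', Γ.horth' m m hm hm]
  simp

/-- a polynomial of degree ≤ N orthogonal to all p m is zero -/
lemma Ctx.zero_of_orth (s : Polynomial ℝ) (hs : s.natDegree ≤ Γ.N)
    (h : ∀ m, m ≤ Γ.N → Γ.ip s (Γ.p m) = 0) : s = 0 := by
  by_contra hne
  have hd : s.natDegree ≤ Γ.N := hs
  have := Γ.proj s s.natDegree (le_trans le_rfl hd) le_rfl
  rw [h s.natDegree hd] at this
  have hlc : s.coeff s.natDegree ≠ 0 := by
    rw [← Polynomial.leadingCoeff]
    exact Polynomial.leadingCoeff_ne_zero.mpr hne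
  have := this.symm
  rw [_root_.div_eq_zero_iff] at this
  rcases this with h1 | h2
  · exact hlc h1
  · exact Γ.κne s.natDegree hd h2


lemma Ctx.a_eq (m : ℕ) (h1 : 1 ≤ m) (hm : m ≤ Γ.N) :
    Γ.ip (X * Γ.p (m-1)) (Γ.p m) = Γ.a m := by
  rw [Γ.ha m h1 hm]
  unfold Ctx.ip
  apply Finset.sum_congr rfl
  intro k _
  simp only [eval_mul, eval_X]
  ring

lemma Ctx.b_eq (m : ℕ) (hm : m ≤ Γ.N) :
    Γ.ip (X * Γ.p m) (Γ.p m) = Γ.b m := by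
  rw [Γ.hb m hm]
  unfold Ctx.ip
  apply Finset.sum_congr rfl
  intro k _
  simp only [eval_mul, eval_X]
  ring

lemma natDegreeXmul (f : Polynomial ℝ) (hf : f ≠ 0) :
    (X * f).natDegree = f.natDegree + 1 := by
  rw [Polynomial.natDegree_mul Polynomial.X_ne_zero hf, Polynomial.natDegree_X]
  omega

lemma Ctx.kappa_a (m : ℕ) (h1 : 1 ≤ m) (hm : m ≤ Γ.N) :
    Γ.a m * Γ.κ m = Γ.κ (m-1) := by
  have hp := Γ.pne0 (m-1) (by omega)
  have hdegXp : (X * Γ.p (m-1)).natDegree ≤ m := by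
    rw [natDegreeXmul _ hp, Γ.hdeg (m-1) (by omega)]
    omega
  have := Γ.proj (X * Γ.p (m-1)) m hm hdegXp
  rw [Γ.a_eq m h1 hm] at this
  have hco : (X * Γ.p (m-1)).coeff m = Γ.κ (m-1) := by
    obtain ⟨m', rfl⟩ : ∃ m', m = m' + 1 := ⟨m-1, by omega⟩
    simp only [Nat.add_sub_cancel]
    rw [Polynomial.coeff_X_mul, Ctx.κ, Polynomial.leadingCoeff, Γ.hdeg m' (by omega)]
  rw [hco] at this
  rw [this]
  field_simp [Γ.κne m hm]

lemma Ctx.apos (m : ℕ) (h1 : 1 ≤ m) (hm : m ≤ Γ.N) : 0 < Γ.a m := by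
  have h := Γ.kappa_a m h1 hm
  have h2 := Γ.κpos m hm
  have h3 := Γ.κpos (m-1) (by omega)
  nlinarith

/-- three-term recurrence -/
lemma Ctx.rec3 (n : ℕ) (hn : n + 1 ≤ Γ.N) :
    X * Γ.p n = Γ.a (n+1) • Γ.p (n+1) + Γ.b n • Γ.p n + Γ.a n • Γ.p (n-1) := by
  set r := X * Γ.p n - (Γ.a (n+1) • Γ.p (n+1) + Γ.b n • Γ.p n + Γ.a n • Γ.p (n-1)) with hr
  have hzero : r = 0 := by
    apply Γ.zero_of_orth
    · rw [hr]
      apply le_trans (Polynomial.natDegree_sub_le _ _)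
      apply max_le
      · rw [natDegreeXmul _ (Γ.pne0 n (by omega)), Γ.hdeg n (by omega)]; omega
      · apply le_trans (Polynomial.natDegree_add_le _ _)
        apply max_le
        · apply le_trans (Polynomial.natDegree_add_le _ _)
          apply max_le
          · exact le_trans (Polynomial.natDegree_smul_le _ _)
              (by rw [Γ.hdeg (n+1) hn]; omega)
          · exact le_trans (Polynomial.natDegree_smul_le _ _)
              (by rw [Γ.hdeg n (by omega)]; omega)
        · exact le_trans (Polynomial.natDegree_smul_le _ _)
            (by rw [Γ.hdeg (n-1) (by omega)]; omega)
    · intro m hm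
      have expand : Γ.ip r (Γ.p m) = Γ.ip (X * Γ.p n) (Γ.p m)
          - (Γ.a (n+1) * Γ.ip (Γ.p (n+1)) (Γ.p m) + Γ.b n * Γ.ip (Γ.p n) (Γ.p m)
            + Γ.a n * Γ.ip (Γ.p (n-1)) (Γ.p m)) := by
        rw [hr, Γ.ip_sub_left, Γ.ip_add_left, Γ.ip_add_left, Γ.ip_smul_left, Γ.ip_smul_left,
          Γ.ip_smul_left]
      rw [expand, Γ.horth' (n+1) m hn hm, Γ.horth' n m (by omega) hm,
        Γ.horth' (n-1) m (by omega) hm]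
      -- compute ip (X * p n) (p m)
      rcases Nat.lt_or_ge m n with hlt | hge
      · -- m < n
        rcases Nat.eq_or_lt_of_le (Nat.succ_le_of_lt hlt) with heq | hlt2
        · -- m + 1 = n
          have hm1 : m = n - 1 := by omega
          have hipa : Γ.ip (X * Γ.p n) (Γ.p m) = Γ.a n := by
            have hsym : Γ.ip (X * Γ.p n) (Γ.p m) = Γ.ip (X * Γ.p m) (Γ.p n) := by
              unfold Ctx.ip
              apply Finset.sum_congr rfl
              intro k _
              simp only [eval_mul, eval_X]; ring
            rw [hsym, show Γ.p m = Γ.p (n-1) by rw [hm1]]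
            exact Γ.a_eq n (by omega) (by omega)
          rw [hipa]
          have h1 : ¬ (n + 1 = m) := by omega
          have h2 : ¬ (n = m) := by omega
          have h3 : (n - 1 = m) := by omega
          simp [h1, h2, h3]
        · -- m + 1 < n : degree too low
          have : Γ.ip (X * Γ.p n) (Γ.p m) = Γ.ip (X * Γ.p m) (Γ.p n) := by
            unfold Ctx.ip
            apply Finset.sum_congr rfl
            intro k _
            simp only [eval_mul, eval_X]; ring
          rw [this, Γ.low_orth (n-1) _ _ n (by omega) (by omega)]
          · have h1 : ¬ (n + 1 = m) := by omega
            have h2 : ¬ (n = m) := by omega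
            have h3 : ¬ (n - 1 = m) := by omega
            simp [h1, h2, h3]
          · rw [natDegreeXmul _ (Γ.pne0 m (by omega)), Γ.hdeg m (by omega)]
            omega
      · rcases Nat.eq_or_lt_of_le hge with heq | hgt
        · -- m = n
          subst heq
          rw [Γ.b_eq n (by omega)]
          have h1 : ¬ (n + 1 = n) := by omega
          by_cases h3 : n - 1 = n
          · -- n = 0
            have hm0 : n = 0 := by omega
            subst hm0
            simp [Γ.ha0]
          · simp [h1, h3]
        · -- m > n
          rcases Nat.eq_or_lt_of_le (Nat.succ_le_of_lt hgt) with heq | hgt2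
        -- m = n+1
          · have : m = n + 1 := by omega
            subst this
            have hipa : Γ.ip (X * Γ.p n) (Γ.p (n+1)) = Γ.a (n+1) := by
              have : Γ.p n = Γ.p ((n+1) - 1) := by norm_num
              rw [this]
              exact Γ.a_eq (n+1) (by omega) hn
            rw [hipa]
            have h2 : ¬ (n = n+1) := by omega
            have h3 : ¬ (n - 1 = n+1) := by omega
            simp [h2, h3]
          · -- m > n+1
            rw [Γ.low_orth (n+1) _ _ m (by omega) hm]
            · have h1 : ¬ (n + 1 = m) := by omega
              have h2 : ¬ (n = m) := by omega
              have h3 : ¬ (n - 1 = m) := by omega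
              simp [h1, h2, h3]
            · rw [natDegreeXmul _ (Γ.pne0 n (by omega)), Γ.hdeg n (by omega)]
  exact sub_eq_zero.mp hzero


/-! shift operator -/

def shf (s : ℝ) (f : Polynomial ℝ) : Polynomial ℝ := f.comp (X + C s)

lemma eval_shf (s t : ℝ) (f : Polynomial ℝ) : (shf s f).eval t = f.eval (t + s) := by
  simp [shf, eval_comp]

lemma natDegree_shf (s : ℝ) (f : Polynomial ℝ) : (shf s f).natDegree = f.natDegree := by
  simp [shf, natDegree_comp]

lemma coeff_shf_top (s : ℝ) (f : Polynomial ℝ) : (shf s f).coeff f.natDegree = f.leadingCoeff := by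
  have h1 : (shf s f).natDegree = f.natDegree := natDegree_shf s f
  have h2 := leadingCoeff_comp (p := f) (q := X + C s) (by simp)
  rw [(monic_X_add_C s).leadingCoeff, one_pow, mul_one] at h2
  calc (shf s f).coeff f.natDegree = (shf s f).coeff (shf s f).natDegree := by rw [h1]
  _ = (shf s f).leadingCoeff := rfl
  _ = f.leadingCoeff := h2

lemma shf_add (s : ℝ) (f g : Polynomial ℝ) : shf s (f + g) = shf s f + shf s g := by
  simp [shf, add_comp]

lemma shf_smul (s r : ℝ) (f : Polynomial ℝ) : shf s (r • f) = r • shf s f := by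
  simp [shf, smul_comp]

lemma coeff_shf_pred (f : Polynomial ℝ) (m : ℕ) (s : ℝ) (h : f.natDegree ≤ m) (hm : 1 ≤ m) :
    (shf s f).coeff (m-1) = f.coeff (m-1) + m * s * f.coeff m := by
  rw [show shf s f = Polynomial.taylor s f from rfl, Polynomial.taylor_coeff]
  have hd : (Polynomial.hasseDeriv (m-1) f).natDegree < 2 := by
    have := Polynomial.natDegree_hasseDeriv_le f (m-1)
    omega
  rw [Polynomial.eval_eq_sum_range' hd]
  rw [Finset.sum_range_succ, Finset.sum_range_succ, Finset.sum_range_zero]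
  rw [Polynomial.hasseDeriv_coeff, Polynomial.hasseDeriv_coeff]
  have h1 : 0 + (m-1) = m-1 := by omega
  have h2 : 1 + (m-1) = m := by omega
  rw [h1, h2, Nat.choose_self]
  have h3 : m.choose (m-1) = m := by
    rw [Nat.choose_symm hm]; exact Nat.choose_one_right m
  push_cast [h3]
  ring

variable (Γ : Ctx)

lemma Ctx.ip_eval_congr (f g f' g' : Polynomial ℝ)
    (h : ∀ x : ℝ, f.eval x * g.eval x = f'.eval x * g'.eval x) :
    Γ.ip f g = Γ.ip f' g' := by
  unfold Ctx.ip
  apply Finset.sum_congr rfl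
  intro k _
  rw [show eval (k:ℝ) f * eval (k:ℝ) g * Γ.w k = (eval (k:ℝ) f * eval (k:ℝ) g) * Γ.w k from rfl, h]

lemma Ctx.ip_shf_lt (s : ℝ) (i j : ℕ) (hij : i < j) (hj : j ≤ Γ.N) :
    Γ.ip (shf s (Γ.p i)) (Γ.p j) = 0 := by
  rw [Γ.proj _ j hj]
  · rw [Polynomial.coeff_eq_zero_of_natDegree_lt]
    · simp
    · rw [natDegree_shf, Γ.hdeg i (by omega)]; omega
  · rw [natDegree_shf, Γ.hdeg i (by omega)]; omega

lemma Ctx.ip_shf_lt' (s : ℝ) (i j : ℕ) (hij : j < i) (hi : i ≤ Γ.N) :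
    Γ.ip (Γ.p i) (shf s (Γ.p j)) = 0 := by
  rw [Γ.ip_comm]
  exact Γ.ip_shf_lt s j i hij hi

lemma Ctx.ip_shf_diag (s : ℝ) (m : ℕ) (hm : m ≤ Γ.N) :
    Γ.ip (shf s (Γ.p m)) (Γ.p m) = 1 := by
  rw [Γ.proj _ m hm]
  · have hco : (shf s (Γ.p m)).coeff m = Γ.κ m := by
      have h := coeff_shf_top s (Γ.p m)
      rwa [Γ.hdeg m hm] at h
    rw [hco]
    field_simp [Γ.κne m hm]
  · rw [natDegree_shf, Γ.hdeg m hm]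

lemma Ctx.ip_shf_diag' (s : ℝ) (m : ℕ) (hm : m ≤ Γ.N) :
    Γ.ip (Γ.p m) (shf s (Γ.p m)) = 1 := by
  rw [Γ.ip_comm]; exact Γ.ip_shf_diag s m hm

/-! shifted inner products -/

def Ctx.E (m : ℕ) : ℝ := Γ.ip (shf 1 (Γ.p m)) (Γ.p (m-1))
def Ctx.Eb (m : ℕ) : ℝ := Γ.ip (Γ.p (m-1)) (shf (-1) (Γ.p m))
def Ctx.Gf (m : ℕ) : ℝ := Γ.ip (shf 1 (Γ.p m)) (Γ.p (m-2))
def Ctx.Gb (m : ℕ) : ℝ := Γ.ip (Γ.p (m-2)) (shf (-1) (Γ.p m))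
def Ctx.G (m : ℕ) : ℝ := Γ.a m * Γ.a (m-1) * Γ.Gf m
def Ctx.Gt (m : ℕ) : ℝ := Γ.a m * Γ.a (m-1) * Γ.Gb m

lemma Ctx.aE : ∀ m, m ≤ Γ.N → Γ.a m * Γ.E m = m := by
  intro m
  induction m with
  | zero => intro _; simp [Γ.ha0]
  | succ m ih =>
    intro hm
    have hm' : m ≤ Γ.N := by omega
    have way : Γ.ip (shf 1 (X * Γ.p m)) (Γ.p m) = Γ.ip (shf 1 (Γ.p m)) ((X + 1) * Γ.p m) := by
      apply Γ.ip_eval_congr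
      intro x
      simp only [eval_shf, eval_mul, eval_add, eval_X, eval_one]
      ring
    rw [Γ.rec3 m hm] at way
    simp only [shf_add, shf_smul, Γ.ip_add_left, Γ.ip_smul_left] at way
    have e1 : Γ.ip (shf 1 (Γ.p (m+1))) (Γ.p m) = Γ.E (m+1) := by
      unfold Ctx.E; norm_num
    have e2 : Γ.ip (shf 1 (Γ.p m)) (Γ.p m) = 1 := Γ.ip_shf_diag 1 m hm'
    have e3 : Γ.a m * Γ.ip (shf 1 (Γ.p (m-1))) (Γ.p m) = 0 := by
      rcases Nat.eq_zero_or_pos m with h0 | hpos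
      · rw [h0, Γ.ha0]; ring
      · rw [Γ.ip_shf_lt 1 (m-1) m (by omega) hm']; ring
    have way2 : Γ.ip (shf 1 (Γ.p m)) ((X + 1) * Γ.p m)
        = Γ.ip (shf 1 (Γ.p m)) (X * Γ.p m) + 1 := by
      have : (X + 1) * Γ.p m = X * Γ.p m + Γ.p m := by ring
      rw [this, Γ.ip_add_right, e2]
    rw [way2, Γ.rec3 m hm] at way
    simp only [Γ.ip_add_right, Γ.ip_smul_right] at way
    have e4 : Γ.ip (shf 1 (Γ.p m)) (Γ.p (m+1)) = 0 := Γ.ip_shf_lt 1 m (m+1) (by omega) hm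
    have e5 : Γ.ip (shf 1 (Γ.p m)) (Γ.p (m-1)) = Γ.E m := rfl
    rw [e1, e2, e4, e5] at way
    have ihm := ih hm'
    push_cast
    nlinarith [way, ihm, e3]

lemma Ctx.aEb : ∀ m, m ≤ Γ.N → Γ.a m * Γ.Eb m = -m := by
  intro m
  induction m with
  | zero => intro _; simp [Γ.ha0]
  | succ m ih =>
    intro hm
    have hm' : m ≤ Γ.N := by omega
    have way : Γ.ip (X * Γ.p m) (shf (-1) (Γ.p m))
        = Γ.ip (Γ.p m) (shf (-1) ((X + 1) * Γ.p m)) := by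
      apply Γ.ip_eval_congr
      intro x
      simp only [eval_shf, eval_mul, eval_add, eval_X, eval_one]
      ring
    rw [Γ.rec3 m hm] at way
    simp only [Γ.ip_add_left, Γ.ip_smul_left] at way
    have e1 : Γ.ip (Γ.p (m+1)) (shf (-1) (Γ.p m)) = 0 := Γ.ip_shf_lt' (-1) (m+1) m (by omega) hm
    have e2 : Γ.ip (Γ.p m) (shf (-1) (Γ.p m)) = 1 := Γ.ip_shf_diag' (-1) m hm'
    have e3 : Γ.a m * Γ.ip (Γ.p (m-1)) (shf (-1) (Γ.p m)) = Γ.a m * Γ.Eb m := rfl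
    have way2 : Γ.ip (Γ.p m) (shf (-1) ((X + 1) * Γ.p m))
        = Γ.ip (Γ.p m) (shf (-1) (X * Γ.p m)) + 1 := by
      have : (X + 1) * Γ.p m = X * Γ.p m + Γ.p m := by ring
      rw [this, shf_add, Γ.ip_add_right, e2]
    rw [way2, Γ.rec3 m hm] at way
    simp only [shf_add, shf_smul, Γ.ip_add_right, Γ.ip_smul_right] at way
    have e4 : Γ.ip (Γ.p m) (shf (-1) (Γ.p (m+1))) = Γ.Eb (m+1) := by
      unfold Ctx.Eb; norm_num
    have e5 : Γ.a m * Γ.ip (Γ.p m) (shf (-1) (Γ.p (m-1))) = 0 := by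
      rcases Nat.eq_zero_or_pos m with h0 | hpos
      · rw [h0, Γ.ha0]; ring
      · rw [Γ.ip_shf_lt' (-1) m (m-1) (by omega) hm']; ring
    rw [e1, e2, e4] at way
    have ihm := ih hm'
    push_cast
    nlinarith [way, ihm, e5]


lemma Ctx.RF (m : ℕ) (hm : m + 2 ≤ Γ.N) :
    Γ.G (m+2) = Γ.G (m+1) + (m+1) * (1 + Γ.b m - Γ.b (m+1)) := by
  have hm1 : m + 1 ≤ Γ.N := by omega
  have hm' : m ≤ Γ.N := by omega
  have way : Γ.ip (shf 1 (X * Γ.p (m+1))) (Γ.p m) = Γ.ip (shf 1 (Γ.p (m+1))) ((X + 1) * Γ.p m) := by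
    apply Γ.ip_eval_congr
    intro x
    simp only [eval_shf, eval_mul, eval_add, eval_X, eval_one]
    ring
  rw [Γ.rec3 (m+1) hm] at way
  simp only [shf_add, shf_smul, Γ.ip_add_left, Γ.ip_smul_left] at way
  have e1 : Γ.ip (shf 1 (Γ.p (m+2))) (Γ.p m) = Γ.Gf (m+2) := by
    unfold Ctx.Gf; norm_num
  have e2 : Γ.ip (shf 1 (Γ.p (m+1))) (Γ.p m) = Γ.E (m+1) := by
    unfold Ctx.E; norm_num
  have e3 : Γ.ip (shf 1 (Γ.p (m+1-1))) (Γ.p m) = 1 := by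
    norm_num
    exact Γ.ip_shf_diag 1 m hm'
  have way2 : Γ.ip (shf 1 (Γ.p (m+1))) ((X + 1) * Γ.p m)
      = Γ.ip (shf 1 (Γ.p (m+1))) (X * Γ.p m) + Γ.E (m+1) := by
    have h : (X + 1) * Γ.p m = X * Γ.p m + Γ.p m := by ring
    rw [h, Γ.ip_add_right, e2]
  rw [way2, Γ.rec3 m hm1] at way
  simp only [Γ.ip_add_right, Γ.ip_smul_right] at way
  have e4 : Γ.ip (shf 1 (Γ.p (m+1))) (Γ.p (m+1)) = 1 := Γ.ip_shf_diag 1 (m+1) hm1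
  have e5 : Γ.ip (shf 1 (Γ.p (m+1))) (Γ.p (m-1)) = Γ.Gf (m+1) := by
    unfold Ctx.Gf
    rw [show m + 1 - 2 = m - 1 from by omega]
  rw [e1, e2, e3, e4, e5] at way
  norm_num at way
  have hE := Γ.aE (m+1) hm1
  unfold Ctx.G
  norm_num
  push_cast at hE ⊢
  linear_combination Γ.a (m+1) * way + (1 + Γ.b m - Γ.b (m+1)) * hE

lemma Ctx.RFb (m : ℕ) (hm : m + 2 ≤ Γ.N) :
    Γ.Gt (m+2) = Γ.Gt (m+1) + (m+1) * (1 + Γ.b (m+1) - Γ.b m) := by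
  have hm1 : m + 1 ≤ Γ.N := by omega
  have hm' : m ≤ Γ.N := by omega
  have way : Γ.ip (X * Γ.p m) (shf (-1) (Γ.p (m+1)))
      = Γ.ip (Γ.p m) (shf (-1) ((X + 1) * Γ.p (m+1))) := by
    apply Γ.ip_eval_congr
    intro x
    simp only [eval_shf, eval_mul, eval_add, eval_X, eval_one]
    ring
  rw [Γ.rec3 m hm1] at way
  simp only [Γ.ip_add_left, Γ.ip_smul_left] at way
  have e1 : Γ.ip (Γ.p (m+1)) (shf (-1) (Γ.p (m+1))) = 1 := Γ.ip_shf_diag' (-1) (m+1) hm1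
  have e2 : Γ.ip (Γ.p m) (shf (-1) (Γ.p (m+1))) = Γ.Eb (m+1) := by
    unfold Ctx.Eb; norm_num
  have e3 : Γ.ip (Γ.p (m-1)) (shf (-1) (Γ.p (m+1))) = Γ.Gb (m+1) := by
    unfold Ctx.Gb
    rw [show m + 1 - 2 = m - 1 from by omega]
  have way2 : Γ.ip (Γ.p m) (shf (-1) ((X + 1) * Γ.p (m+1)))
      = Γ.ip (Γ.p m) (shf (-1) (X * Γ.p (m+1))) + Γ.Eb (m+1) := by
    have h : (X + 1) * Γ.p (m+1) = X * Γ.p (m+1) + Γ.p (m+1) := by ring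
    rw [h, shf_add, Γ.ip_add_right, e2]
  rw [way2, Γ.rec3 (m+1) hm] at way
  simp only [shf_add, shf_smul, Γ.ip_add_right, Γ.ip_smul_right] at way
  have e4 : Γ.ip (Γ.p m) (shf (-1) (Γ.p (m+2))) = Γ.Gb (m+2) := by
    unfold Ctx.Gb; norm_num
  have e5 : Γ.ip (Γ.p m) (shf (-1) (Γ.p (m+1-1))) = 1 := by
    norm_num
    exact Γ.ip_shf_diag' (-1) m hm'
  rw [e1, e2, e3, e4, e5] at way
  norm_num at way
  have hEb := Γ.aEb (m+1) hm1
  unfold Ctx.Gt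
  norm_num
  push_cast at hEb ⊢
  linear_combination (-(Γ.a (m+1))) * way - (1 + Γ.b (m+1) - Γ.b m) * hEb

lemma Ctx.GGt : ∀ m, 1 ≤ m → m ≤ Γ.N → Γ.G m + Γ.Gt m = m * (m - 1) := by
  intro m
  induction m with
  | zero => omega
  | succ m ih =>
    intro _ hm
    rcases Nat.eq_zero_or_pos m with h0 | hpos
    · subst h0
      unfold Ctx.G Ctx.Gt
      norm_num [Γ.ha0]
    · obtain ⟨m', rfl⟩ : ∃ m', m = m' + 1 := ⟨m-1, by omega⟩
      have h1 := Γ.RF m' (by omega)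
      have h2 := Γ.RFb m' (by omega)
      have h3 := ih (by omega) (by omega)
      push_cast at h3 ⊢
      push_cast at h1 h2
      linarith [h1, h2, h3]


lemma Ctx.pearson (k : ℕ) (hk : k + 1 ≤ Γ.N) :
    ((k:ℝ)+1) * (((k:ℝ)+1) - Γ.α) * Γ.w (k+1) = Γ.c * ((Γ.N:ℝ) - k) * Γ.w k := by
  rw [Γ.hw (k+1) hk, Γ.hw k (by omega)]
  have hprod : ∏ j ∈ Finset.range (k+1), (1 - Γ.α + (j:ℝ))
      = (∏ j ∈ Finset.range k, (1 - Γ.α + (j:ℝ))) * (1 - Γ.α + k) := by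
    rw [Finset.prod_range_succ]
  have hchoose : ((Γ.N.choose (k+1)):ℝ) * ((k:ℝ)+1) = ((Γ.N.choose k):ℝ) * ((Γ.N:ℝ) - (k:ℝ)) := by
    have h : Γ.N.choose (k+1) * (k+1) = Γ.N.choose k * (Γ.N - k) := Nat.choose_succ_right_eq Γ.N k
    have hkN : k ≤ Γ.N := by omega
    have h2 : ((Γ.N.choose (k+1) * (k+1) : ℕ) : ℝ) = ((Γ.N.choose k * (Γ.N - k) : ℕ) : ℝ) := by
      exact_mod_cast congrArg (fun t : ℕ => (t:ℝ)) h
    push_cast [Nat.cast_sub hkN] at h2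
    linarith
  have hP : (∏ j ∈ Finset.range k, (1 - Γ.α + (j:ℝ))) ≠ 0 := ne_of_gt (Γ.prodpos k)
  have hfac : (1 - Γ.α + (k:ℝ)) ≠ 0 := by
    have h0 : (0:ℝ) ≤ (k:ℝ) := Nat.cast_nonneg k
    have := Γ.hα
    intro h; nlinarith
  rw [hprod]
  field_simp
  linear_combination ((((k:ℝ)+1) - Γ.α) * Γ.c^(k+1)) * hchoose

lemma Ctx.master (q : Polynomial ℝ) :
    ∑ k ∈ Finset.range (Γ.N+1), (k:ℝ) * ((k:ℝ) - Γ.α) * q.eval (k:ℝ) * Γ.w k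
    = Γ.c * ∑ k ∈ Finset.range (Γ.N+1), ((Γ.N:ℝ) - (k:ℝ)) * q.eval ((k:ℝ)+1) * Γ.w k := by
  have lhs_eq : ∑ k ∈ Finset.range (Γ.N+1), (k:ℝ) * ((k:ℝ) - Γ.α) * q.eval (k:ℝ) * Γ.w k
      = ∑ k ∈ Finset.range Γ.N, Γ.c * (((Γ.N:ℝ) - (k:ℝ)) * q.eval ((k:ℝ)+1) * Γ.w k) := by
    rw [Finset.sum_range_succ' (fun k => (k:ℝ) * ((k:ℝ) - Γ.α) * q.eval (k:ℝ) * Γ.w k) Γ.N]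
    simp only [Nat.cast_zero, zero_mul, add_zero]
    apply Finset.sum_congr rfl
    intro k hk
    have hk' : k + 1 ≤ Γ.N := by
      simp only [Finset.mem_range] at hk; omega
    have hp := Γ.pearson k hk'
    push_cast
    linear_combination (q.eval ((k:ℝ)+1)) * hp
  rw [lhs_eq]
  rw [Finset.sum_range_succ (fun k => ((Γ.N:ℝ) - (k:ℝ)) * q.eval ((k:ℝ)+1) * Γ.w k) Γ.N]
  rw [sub_self, zero_mul, zero_mul, add_zero, Finset.mul_sum]


lemma Ctx.RC (n : ℕ) (hn : n + 1 ≤ Γ.N) :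
    Γ.a (n+1)^2 + Γ.a n^2 + Γ.b n^2 - (2*(n:ℝ) + Γ.α) * Γ.b n + (Γ.α - 1)*(n:ℝ)
      + (n:ℝ)*((n:ℝ)+1) - Γ.G (n+1)
    = Γ.c * ((Γ.N:ℝ) - Γ.b n - (n:ℝ)) := by
  have hn' : n ≤ Γ.N := by omega
  have hm := Γ.master (Γ.p n * shf (-1) (Γ.p n))
  have hL : ∑ k ∈ Finset.range (Γ.N+1),
        (k:ℝ) * ((k:ℝ) - Γ.α) * (Γ.p n * shf (-1) (Γ.p n)).eval (k:ℝ) * Γ.w k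
      = Γ.ip (X * Γ.p n) (shf (-1) ((X+1) * Γ.p n))
        - Γ.α * Γ.ip (X * Γ.p n) (shf (-1) (Γ.p n)) := by
    unfold Ctx.ip
    rw [Finset.mul_sum, ← Finset.sum_sub_distrib]
    apply Finset.sum_congr rfl
    intro k _
    simp only [eval_mul, eval_add, eval_X, eval_one, eval_shf]
    ring
  have hR : ∑ k ∈ Finset.range (Γ.N+1),
        ((Γ.N:ℝ) - (k:ℝ)) * (Γ.p n * shf (-1) (Γ.p n)).eval ((k:ℝ)+1) * Γ.w k
      = (Γ.N:ℝ) * Γ.ip (shf 1 (Γ.p n)) (Γ.p n) - Γ.ip (shf 1 (Γ.p n)) (X * Γ.p n) := by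
    unfold Ctx.ip
    rw [Finset.mul_sum, ← Finset.sum_sub_distrib]
    apply Finset.sum_congr rfl
    intro k _
    simp only [eval_mul, eval_add, eval_X, eval_one, eval_shf]
    ring
  rw [hL, hR] at hm
  have hXp := Γ.rec3 n hn
  -- value lemmas
  have d1 : Γ.ip (Γ.p (n+1)) (shf (-1) (Γ.p (n+1))) = 1 := Γ.ip_shf_diag' (-1) (n+1) hn
  have d0 : Γ.ip (Γ.p n) (shf (-1) (Γ.p n)) = 1 := Γ.ip_shf_diag' (-1) n hn'
  have dm : Γ.ip (Γ.p (n-1)) (shf (-1) (Γ.p (n-1))) = 1 := Γ.ip_shf_diag' (-1) (n-1) (by omega)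
  have z1 : Γ.ip (Γ.p (n+1)) (shf (-1) (Γ.p n)) = 0 := Γ.ip_shf_lt' (-1) (n+1) n (by omega) hn
  have z2 : Γ.ip (Γ.p (n+1)) (shf (-1) (Γ.p (n-1))) = 0 :=
    Γ.ip_shf_lt' (-1) (n+1) (n-1) (by omega) hn
  have hZ : Γ.a n * Γ.ip (Γ.p n) (shf (-1) (Γ.p (n-1))) = 0 := by
    rcases Nat.eq_zero_or_pos n with h0 | hpos
    · rw [h0, Γ.ha0]; ring
    · rw [Γ.ip_shf_lt' (-1) n (n-1) (by omega) hn']; ring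
  have eb1 : Γ.ip (Γ.p n) (shf (-1) (Γ.p (n+1))) = Γ.Eb (n+1) := by
    unfold Ctx.Eb; norm_num
  have eb0 : Γ.ip (Γ.p (n-1)) (shf (-1) (Γ.p n)) = Γ.Eb n := rfl
  have gb1 : Γ.ip (Γ.p (n-1)) (shf (-1) (Γ.p (n+1))) = Γ.Gb (n+1) := by
    unfold Ctx.Gb
    rw [show n + 1 - 2 = n - 1 from by omega]
  -- T1 expansion
  have hT1 : Γ.ip (X * Γ.p n) (shf (-1) ((X+1) * Γ.p n))
      = Γ.a (n+1)^2 + Γ.b n * (Γ.a (n+1) * Γ.Eb (n+1)) + Γ.b n * (Γ.b n + 1)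
        + Γ.a n * (Γ.a (n+1) * Γ.Gb (n+1)) + (Γ.b n + 1) * (Γ.a n * Γ.Eb n) + Γ.a n^2 := by
    rw [show (X+1) * Γ.p n = X * Γ.p n + Γ.p n from by ring]
    rw [hXp]
    simp only [shf_add, shf_smul, Γ.ip_add_left, Γ.ip_smul_left, Γ.ip_add_right, Γ.ip_smul_right]
    rw [d1, d0, dm, z1, z2, eb1, eb0, gb1]
    linear_combination Γ.b n * hZ
  -- T2 expansion
  have hT2 : Γ.ip (X * Γ.p n) (shf (-1) (Γ.p n)) = Γ.b n + Γ.a n * Γ.Eb n := by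
    rw [hXp]
    simp only [Γ.ip_add_left, Γ.ip_smul_left]
    rw [d0, z1, eb0]
    ring
  -- RHS expansion
  have hR2 : Γ.ip (shf 1 (Γ.p n)) (X * Γ.p n) = Γ.b n + Γ.a n * Γ.E n := by
    rw [hXp]
    simp only [Γ.ip_add_right, Γ.ip_smul_right]
    rw [Γ.ip_shf_lt 1 n (n+1) (by omega) hn, Γ.ip_shf_diag 1 n hn']
    have : Γ.ip (shf 1 (Γ.p n)) (Γ.p (n-1)) = Γ.E n := rfl
    rw [this]; ring
  rw [hT1, hT2, hR2, Γ.ip_shf_diag 1 n hn'] at hm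
  have hEb1 := Γ.aEb (n+1) hn
  have hEb0 := Γ.aEb n hn'
  have hE0 := Γ.aE n hn'
  have hGGt1 := Γ.GGt (n+1) (by omega) hn
  simp only [Ctx.G, Ctx.Gt] at hGGt1 ⊢
  norm_num at hGGt1 ⊢
  push_cast at hEb1 hEb0 hE0 hGGt1 ⊢
  linear_combination hm - Γ.b n * hEb1 - (Γ.b n + 1 - Γ.α) * hEb0 - Γ.c * hE0 - hGGt1


lemma Ctx.RB (n : ℕ) (hn : n + 1 ≤ Γ.N) :
    Γ.a (n+1)^2 * (Γ.b (n+1) + Γ.b n - (n:ℝ) - Γ.α)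
    = Γ.c * (((n:ℝ)+1) * ((Γ.N:ℝ) - Γ.b n) - Γ.a (n+1)^2 - Γ.G (n+1)) := by
  have hn' : n ≤ Γ.N := by omega
  have hm := Γ.master (Γ.p (n+1) * shf (-1) (Γ.p n))
  have hL : ∑ k ∈ Finset.range (Γ.N+1),
        (k:ℝ) * ((k:ℝ) - Γ.α) * (Γ.p (n+1) * shf (-1) (Γ.p n)).eval (k:ℝ) * Γ.w k
      = Γ.ip (X * Γ.p (n+1)) (shf (-1) ((X+1) * Γ.p n))
        - Γ.α * Γ.ip (Γ.p (n+1)) (shf (-1) ((X+1) * Γ.p n)) := by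
    unfold Ctx.ip
    rw [Finset.mul_sum, ← Finset.sum_sub_distrib]
    apply Finset.sum_congr rfl
    intro k _
    simp only [eval_mul, eval_add, eval_X, eval_one, eval_shf]
    ring
  have hR : ∑ k ∈ Finset.range (Γ.N+1),
        ((Γ.N:ℝ) - (k:ℝ)) * (Γ.p (n+1) * shf (-1) (Γ.p n)).eval ((k:ℝ)+1) * Γ.w k
      = (Γ.N:ℝ) * Γ.ip (shf 1 (Γ.p (n+1))) (Γ.p n) - Γ.ip (shf 1 (Γ.p (n+1))) (X * Γ.p n) := by
    unfold Ctx.ip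
    rw [Finset.mul_sum, ← Finset.sum_sub_distrib]
    apply Finset.sum_congr rfl
    intro k _
    simp only [eval_mul, eval_add, eval_X, eval_one, eval_shf]
    ring
  rw [hL, hR] at hm
  have hXp := Γ.rec3 n hn
  have d1 : Γ.ip (Γ.p (n+1)) (shf (-1) (Γ.p (n+1))) = 1 := Γ.ip_shf_diag' (-1) (n+1) hn
  have z1 : Γ.ip (Γ.p (n+1)) (shf (-1) (Γ.p n)) = 0 := Γ.ip_shf_lt' (-1) (n+1) n (by omega) hn
  have z2 : Γ.ip (Γ.p (n+1)) (shf (-1) (Γ.p (n-1))) = 0 :=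
    Γ.ip_shf_lt' (-1) (n+1) (n-1) (by omega) hn
  -- Term_b
  have hTb : Γ.ip (Γ.p (n+1)) (shf (-1) ((X+1) * Γ.p n)) = Γ.a (n+1) := by
    rw [show (X+1) * Γ.p n = X * Γ.p n + Γ.p n from by ring, hXp]
    simp only [shf_add, shf_smul, Γ.ip_add_right, Γ.ip_smul_right]
    rw [d1, z1, z2]
    ring
  -- S2
  have hS2 : Γ.ip (X * Γ.p (n+1)) (shf (-1) (Γ.p n)) = Γ.a (n+1) := by
    have hsym : Γ.ip (X * Γ.p (n+1)) (shf (-1) (Γ.p n))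
        = Γ.ip (X * shf (-1) (Γ.p n)) (Γ.p (n+1)) := by
      apply Γ.ip_eval_congr
      intro x
      simp only [eval_mul, eval_X]
      ring
    rw [hsym, Γ.proj _ (n+1) hn]
    · have hco : (X * shf (-1) (Γ.p n)).coeff (n+1) = Γ.κ n := by
        rw [Polynomial.coeff_X_mul]
        have h := coeff_shf_top (-1) (Γ.p n)
        rwa [Γ.hdeg n hn'] at h
      rw [hco]
      have hka := Γ.kappa_a (n+1) (by omega) hn
      norm_num at hka
      field_simp [Γ.κne (n+1) hn]
      linarith [hka]
    · apply le_trans (Polynomial.natDegree_mul_le)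
      rw [Polynomial.natDegree_X, natDegree_shf, Γ.hdeg n hn']
      omega
  -- S3
  have hS3 : Γ.a n * Γ.ip (X * Γ.p (n+1)) (shf (-1) (Γ.p (n-1))) = 0 := by
    rcases Nat.eq_zero_or_pos n with h0 | hpos
    · rw [h0, Γ.ha0]; ring
    · have hsym : Γ.ip (X * Γ.p (n+1)) (shf (-1) (Γ.p (n-1)))
          = Γ.ip (X * shf (-1) (Γ.p (n-1))) (Γ.p (n+1)) := by
        apply Γ.ip_eval_congr
        intro x
        simp only [eval_mul, eval_X]
        ring
      rw [hsym, Γ.proj _ (n+1) hn]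
      · rw [Polynomial.coeff_X_mul, Polynomial.coeff_eq_zero_of_natDegree_lt]
        · simp
        · rw [natDegree_shf, Γ.hdeg (n-1) (by omega)]; omega
      · apply le_trans (Polynomial.natDegree_mul_le)
        rw [Polynomial.natDegree_X, natDegree_shf, Γ.hdeg (n-1) (by omega)]
        omega
  -- S1 via the ρ decomposition
  have hEb1 := Γ.aEb (n+1) hn
  have hS1 : Γ.ip (X * Γ.p (n+1)) (shf (-1) (Γ.p (n+1)))
      = Γ.b (n+1) + Γ.a (n+1) * Γ.Eb (n+1) := by
    set ρ := shf (-1) (Γ.p (n+1)) - Γ.p (n+1) - Γ.Eb (n+1) • Γ.p n with hρ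
    have hdecomp : shf (-1) (Γ.p (n+1)) = Γ.p (n+1) + Γ.Eb (n+1) • Γ.p n + ρ := by
      rw [hρ]; ring
    have hcoeffn1 : (Γ.p (n+1)).coeff (n+1) = Γ.κ (n+1) := by
      rw [Ctx.κ, Polynomial.leadingCoeff, Γ.hdeg (n+1) hn]
    have hcoeffn : (Γ.p n).coeff n = Γ.κ n := by
      rw [Ctx.κ, Polynomial.leadingCoeff, Γ.hdeg n hn']
    have hρdeg : ρ.natDegree ≤ n := by
      rw [Polynomial.natDegree_le_iff_coeff_eq_zero]
      intro i hi
      rw [hρ]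
      simp only [Polynomial.coeff_sub, Polynomial.coeff_smul, smul_eq_mul]
      rcases Nat.lt_or_ge (n+1) i with hgt | hle
      · rw [Polynomial.coeff_eq_zero_of_natDegree_lt (by rw [natDegree_shf, Γ.hdeg (n+1) hn]; omega),
          Polynomial.coeff_eq_zero_of_natDegree_lt (by rw [Γ.hdeg (n+1) hn]; omega),
          Polynomial.coeff_eq_zero_of_natDegree_lt (by rw [Γ.hdeg n hn']; omega)]
        ring
      · have hieq : i = n+1 := by omega
        subst hieq
        have htop : (shf (-1) (Γ.p (n+1))).coeff (n+1) = Γ.κ (n+1) := by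
          have h := coeff_shf_top (-1) (Γ.p (n+1))
          rwa [Γ.hdeg (n+1) hn] at h
        rw [htop, hcoeffn1, Polynomial.coeff_eq_zero_of_natDegree_lt (by rw [Γ.hdeg n hn']; omega)]
        ring
    have hρn : ρ.coeff n = 0 := by
      rw [hρ]
      simp only [Polynomial.coeff_sub, Polynomial.coeff_smul, smul_eq_mul]
      have hpred := coeff_shf_pred (Γ.p (n+1)) (n+1) (-1) (le_of_eq (Γ.hdeg (n+1) hn)) (by omega)
      norm_num at hpred
      rw [hpred, hcoeffn1, hcoeffn]
      have hka := Γ.kappa_a (n+1) (by omega) hn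
      norm_num at hka
      push_cast at hEb1
      linear_combination (-(Γ.κ (n+1))) * hEb1 + Γ.Eb (n+1) * hka
    have hipρ : Γ.ip (X * Γ.p (n+1)) ρ = 0 := by
      have hsym : Γ.ip (X * Γ.p (n+1)) ρ = Γ.ip (X * ρ) (Γ.p (n+1)) := by
        apply Γ.ip_eval_congr
        intro x
        simp only [eval_mul, eval_X]
        ring
      rw [hsym, Γ.proj _ (n+1) hn]
      · rw [Polynomial.coeff_X_mul, hρn]; simp
      · apply le_trans (Polynomial.natDegree_mul_le)
        rw [Polynomial.natDegree_X]
        omega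
    have hb1 : Γ.ip (X * Γ.p (n+1)) (Γ.p (n+1)) = Γ.b (n+1) := Γ.b_eq (n+1) hn
    have ha1 : Γ.ip (X * Γ.p (n+1)) (Γ.p n) = Γ.a (n+1) := by
      have hsym : Γ.ip (X * Γ.p (n+1)) (Γ.p n) = Γ.ip (X * Γ.p n) (Γ.p (n+1)) := by
        apply Γ.ip_eval_congr
        intro x
        simp only [eval_mul, eval_X]
        ring
      rw [hsym]
      have h := Γ.a_eq (n+1) (by omega) hn
      norm_num at h
      exact h
    rw [hdecomp, Γ.ip_add_right, Γ.ip_add_right, Γ.ip_smul_right, hb1, ha1, hipρ]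
    ring
  -- Term_a expansion
  have hTa : Γ.ip (X * Γ.p (n+1)) (shf (-1) ((X+1) * Γ.p n))
      = Γ.a (n+1) * (Γ.b (n+1) + Γ.a (n+1) * Γ.Eb (n+1)) + (Γ.b n + 1) * Γ.a (n+1)
        + Γ.a n * Γ.ip (X * Γ.p (n+1)) (shf (-1) (Γ.p (n-1))) := by
    rw [show (X+1) * Γ.p n = X * Γ.p n + Γ.p n from by ring, hXp]
    simp only [shf_add, shf_smul, Γ.ip_add_right, Γ.ip_smul_right]
    rw [hS1, hS2]
    ring
  -- RHS expansion
  have hE1 := Γ.aE (n+1) hn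
  have he1 : Γ.ip (shf 1 (Γ.p (n+1))) (Γ.p n) = Γ.E (n+1) := by
    unfold Ctx.E; norm_num
  have hgf1 : Γ.ip (shf 1 (Γ.p (n+1))) (Γ.p (n-1)) = Γ.Gf (n+1) := by
    unfold Ctx.Gf
    rw [show n + 1 - 2 = n - 1 from by omega]
  have hR2 : Γ.ip (shf 1 (Γ.p (n+1))) (X * Γ.p n)
      = Γ.a (n+1) + Γ.b n * Γ.E (n+1) + Γ.a n * Γ.Gf (n+1) := by
    rw [hXp]
    simp only [Γ.ip_add_right, Γ.ip_smul_right]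
    rw [Γ.ip_shf_diag 1 (n+1) hn, he1, hgf1]
    ring
  rw [hTa, hTb, hR2, he1] at hm
  simp only [Ctx.G]
  norm_num
  push_cast at hEb1 hE1 ⊢
  linear_combination Γ.a (n+1) * hm - Γ.a (n+1)^2 * hEb1
    + (Γ.c * ((Γ.N:ℝ) - Γ.b n)) * hE1 - Γ.a (n+1) * hS3

end

end GKaux

/-- Theorem 1 (discrete system for the recurrence coefficients of the
generalized Krawtchouk weight `w(k) = C(N,k) c^k / (1-α)_k`). -/
theorem generalized_krawtchouk_discrete_system
    (N : ℕ) (hN : 1 ≤ N) (α c : ℝ) (hα : α < 1) (hc : 0 < c)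
    (w : ℕ → ℝ)
    (hw : ∀ k, k ≤ N →
      w k = (N.choose k : ℝ) * c ^ k / ∏ j ∈ Finset.range k, (1 - α + (j : ℝ)))
    (p : ℕ → Polynomial ℝ)
    (hdeg : ∀ n, n ≤ N → (p n).natDegree = n)
    (hlead : ∀ n, n ≤ N → 0 < (p n).leadingCoeff)
    (horth : ∀ m, m ≤ N → ∀ n, n ≤ N →
      ∑ k ∈ Finset.range (N + 1), (p m).eval (k : ℝ) * (p n).eval (k : ℝ) * w k
        = if m = n then 1 else 0)
    (a b : ℕ → ℝ)
    (ha0 : a 0 = 0)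
    (ha : ∀ n, 1 ≤ n → n ≤ N →
      a n = ∑ k ∈ Finset.range (N + 1),
        (k : ℝ) * (p n).eval (k : ℝ) * (p (n - 1)).eval (k : ℝ) * w k)
    (hb : ∀ n, n ≤ N →
      b n = ∑ k ∈ Finset.range (N + 1), (k : ℝ) * ((p n).eval (k : ℝ)) ^ 2 * w k)
    (x y : ℕ → ℝ)
    (hx : ∀ n, x n = ((a n) ^ 2 / c + (n : ℝ)) / N)
    (hy : ∀ n, y n = -(b n + (N : ℝ) + 1 + c - (n : ℝ) - α) / N) :
    (∀ n : ℕ, n + 1 ≤ N →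
      c * (N : ℝ) * ((x n + y n) * (x (n + 1) + y n))
        = -(y n * ((N : ℝ) + 1 + (N : ℝ) * y n) * ((N : ℝ) + 1 - α + (N : ℝ) * y n))) ∧
    (∀ n : ℕ, 1 ≤ n → n + 1 ≤ N →
      (N : ℝ) * ((N : ℝ) * x n - (n : ℝ)) * ((x n + y n) * (x n + y (n - 1)))
        = x n * (-(N : ℝ) - 1 + (N : ℝ) * x n) * (α - (N : ℝ) - 1 + (N : ℝ) * x n)) ∧
    (∀ n : ℕ, 1 ≤ n → n ≤ N →
      (N : ℝ) * x n - (n : ℝ) = (a n) ^ 2 / c ∧ 0 < (a n) ^ 2 / c) := by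
  have hNR : ((N : ℕ) : ℝ) ≠ 0 := Nat.cast_ne_zero.mpr (by omega)
  have hcR : c ≠ 0 := ne_of_gt hc
  let Γ : GKaux.Ctx := ⟨N, α, c, w, p, a, b, hN, hα, hc, hw, hdeg, hlead, horth, ha0, ha, hb⟩
  have hRC : ∀ m, m + 1 ≤ N →
      a (m+1)^2 + a m^2 + b m^2 - (2*(m:ℝ) + α) * b m + (α - 1)*(m:ℝ)
        + (m:ℝ)*((m:ℝ)+1) - Γ.G (m+1) = c * ((N:ℝ) - b m - (m:ℝ)) :=
    fun m hm => Γ.RC m hm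
  have hRB : ∀ m, m + 1 ≤ N →
      a (m+1)^2 * (b (m+1) + b m - (m:ℝ) - α)
        = c * (((m:ℝ)+1) * ((N:ℝ) - b m) - a (m+1)^2 - Γ.G (m+1)) :=
    fun m hm => Γ.RB m hm
  have hRF : ∀ m, m + 2 ≤ N →
      Γ.G (m+2) = Γ.G (m+1) + ((m:ℝ)+1) * (1 + b m - b (m+1)) :=
    fun m hm => by
      have h := Γ.RF m hm
      push_cast at h
      exact h
  have hG1 : Γ.G 1 = 0 := by
    show Γ.a 1 * Γ.a 0 * Γ.Gf 1 = 0
    rw [show Γ.a 0 = 0 from ha0]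
    ring
  -- the key first-integral / string equation, by induction
  have hT1 : ∀ n : ℕ, n + 1 ≤ N →
      (a n^2 + c*(2*(n:ℝ)+α-b n-(N:ℝ)-1-c)) * (a (n+1)^2 + c*(2*(n:ℝ)+1+α-b n-(N:ℝ)-1-c))
      = c*((b n+(N:ℝ)+1+c-(n:ℝ)-α)*((b n+c-(n:ℝ)-α)*(b n+c-(n:ℝ)))) := by
    intro n
    induction n with
    | zero =>
      intro h1
      have h := hRC 0 h1
      rw [hG1] at h
      norm_num at h ⊢
      rw [show a 0 = 0 from ha0] at h ⊢
      linear_combination (-(c)*(1+c-α+(N:ℝ)+b 0)) * h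
    | succ m ih =>
      intro h2
      have prev := ih (by omega)
      have R1 := hRC m (by omega)
      have R2 := hRB m (by omega)
      have R3 := hRF m h2
      have R4 := hRC (m+1) h2
      norm_num at R4 ⊢
      push_cast at prev R1 R2 R3 R4 ⊢
      linear_combination prev + (c*(2+c-α+(N:ℝ)-2*((m:ℝ)+1)+b m) - a (m+1)^2) * R1
        + (1 + b m - b (m+1)) * R2
        + (a (m+1)^2 - c*(1+c-α+(N:ℝ)-2*((m:ℝ)+1)+b (m+1))) * (R3 + R4)
  have hT2 : ∀ m : ℕ, m + 2 ≤ N →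
      a (m+1)^2 * ((a (m+1)^2 + c*(2*((m:ℝ)+1)+α-b (m+1)-(N:ℝ)-1-c))
          * (a (m+1)^2 + c*(2*((m:ℝ)+1)-1+α-b m-(N:ℝ)-1-c)))
      = (a (m+1)^2+c*((m:ℝ)+1))*((a (m+1)^2+c*((m:ℝ)+1)-c*(N:ℝ)-c)
          * (a (m+1)^2+c*((m:ℝ)+1)+c*α-c*(N:ℝ)-c)) := by
    intro m hm
    have R0 := hT1 m (by omega)
    have R1 := hRC m (by omega)
    have R2 := hRB m (by omega)
    push_cast at R0 R1 R2 ⊢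
    linear_combination c^2 * R0 + c^2*(c*(2+c-α+(N:ℝ)-2*((m:ℝ)+1)+b m) - a (m+1)^2) * R1
      + c*(c*(2+c-α+(N:ℝ)-2*((m:ℝ)+1)+b m) - a (m+1)^2) * R2
  refine ⟨?_, ?_, ?_⟩
  · -- part 1
    intro n hn
    have hx1 : x (n+1) = ((a (n+1))^2/c + ((n:ℝ)+1))/(N:ℝ) := by
      rw [hx (n+1)]; push_cast; ring
    have L1 : c * (N:ℝ) * ((x n + y n) * (x (n + 1) + y n))
        = ((a n^2 + c*(2*(n:ℝ)+α-b n-(N:ℝ)-1-c))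
            * (a (n+1)^2 + c*(2*(n:ℝ)+1+α-b n-(N:ℝ)-1-c)))/(c*(N:ℝ)) := by
      rw [hx n, hx1, hy n]; field_simp; ring
    have R1 : -(y n * ((N:ℝ) + 1 + (N:ℝ) * y n) * ((N:ℝ) + 1 - α + (N:ℝ) * y n))
        = (c*((b n+(N:ℝ)+1+c-(n:ℝ)-α)*((b n+c-(n:ℝ)-α)*(b n+c-(n:ℝ)))))/(c*(N:ℝ)) := by
      rw [hy n]; field_simp; ring
    rw [L1, R1, hT1 n hn]
  · -- part 2
    intro n h1 h2
    obtain ⟨m, rfl⟩ : ∃ m, n = m + 1 := ⟨n - 1, by omega⟩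
    simp only [Nat.add_sub_cancel]
    have hxn : x (m+1) = ((a (m+1))^2/c + ((m:ℝ)+1))/(N:ℝ) := by
      rw [hx (m+1)]; push_cast; ring
    have hyn : y (m+1) = -(b (m+1) + (N:ℝ) + 1 + c - ((m:ℝ)+1) - α)/(N:ℝ) := by
      rw [hy (m+1)]; push_cast; ring
    have hyn1 : y m = -(b m + (N:ℝ) + 1 + c - (((m:ℝ)+1)-1) - α)/(N:ℝ) := by
      rw [hy m]; push_cast; ring
    have L2 : (N:ℝ) * ((N:ℝ) * x (m+1) - ((m:ℝ)+1)) * ((x (m+1) + y (m+1)) * (x (m+1) + y m))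
        = (a (m+1)^2 * ((a (m+1)^2 + c*(2*((m:ℝ)+1)+α-b (m+1)-(N:ℝ)-1-c))
            * (a (m+1)^2 + c*(2*((m:ℝ)+1)-1+α-b m-(N:ℝ)-1-c))))/(c^3*(N:ℝ)) := by
      rw [hxn, hyn, hyn1]; field_simp; ring
    have R2 : x (m+1) * (-(N:ℝ) - 1 + (N:ℝ) * x (m+1)) * (α - (N:ℝ) - 1 + (N:ℝ) * x (m+1))
        = ((a (m+1)^2+c*((m:ℝ)+1))*((a (m+1)^2+c*((m:ℝ)+1)-c*(N:ℝ)-c)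
            * (a (m+1)^2+c*((m:ℝ)+1)+c*α-c*(N:ℝ)-c)))/(c^3*(N:ℝ)) := by
      rw [hxn]; field_simp; ring
    push_cast
    rw [L2, R2, hT2 m h2]
  · -- part 3
    intro n h1 h2
    have han : 0 < a n := Γ.apos n h1 h2
    constructor
    · rw [hx n]; field_simp; ring
    · positivity
end

section
/- The initial values of the sequences x_n, y_n are x_0 = 0 and y_0 = −(N+1+c−α)/N − (c/(1−α))·M(−N+1, 2−α, −c)/M(−N, 1−α, −c), where M(−N, 1−α, −c) = Σ_{s=0}^{N} C(N,s)·c^s/(1−α)_s and M(−N+1, 2−α, −c) = Σ_{s=0}^{N−1} C(N−1,s)·c^s/(2−α)_s are the terminating Kummer confluent hypergeometric sums. -/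
/-- The initial values `x₀ = 0` and
`y₀ = -(N+1+c-α)/N - (c/(1-α)) · M(-N+1, 2-α, -c)/M(-N, 1-α, -c)`
for the discrete system of the generalized Krawtchouk weight, where the
terminating Kummer functions are written as finite sums. -/
theorem generalized_krawtchouk_initial_values
    (N : ℕ) (hN : 1 ≤ N) (α c : ℝ) (hα : α < 1) (hc : 0 < c)
    (w : ℕ → ℝ)
    (hw : ∀ k, k ≤ N →
      w k = (N.choose k : ℝ) * c ^ k / ∏ j ∈ Finset.range k, (1 - α + (j : ℝ)))
    (p : ℕ → Polynomial ℝ)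
    (hdeg : ∀ n, n ≤ N → (p n).natDegree = n)
    (hlead : ∀ n, n ≤ N → 0 < (p n).leadingCoeff)
    (horth : ∀ m, m ≤ N → ∀ n, n ≤ N →
      ∑ k ∈ Finset.range (N + 1), (p m).eval (k : ℝ) * (p n).eval (k : ℝ) * w k
        = if m = n then 1 else 0)
    (a b : ℕ → ℝ)
    (ha0 : a 0 = 0)
    (ha : ∀ n, 1 ≤ n → n ≤ N →
      a n = ∑ k ∈ Finset.range (N + 1),
        (k : ℝ) * (p n).eval (k : ℝ) * (p (n - 1)).eval (k : ℝ) * w k)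
    (hb : ∀ n, n ≤ N →
      b n = ∑ k ∈ Finset.range (N + 1), (k : ℝ) * ((p n).eval (k : ℝ)) ^ 2 * w k)
    (x y : ℕ → ℝ)
    (hx : ∀ n, x n = ((a n) ^ 2 / c + (n : ℝ)) / N)
    (hy : ∀ n, y n = -(b n + (N : ℝ) + 1 + c - (n : ℝ) - α) / N) :
    x 0 = 0 ∧
    y 0 = -((N : ℝ) + 1 + c - α) / N
      - (c / (1 - α)) *
        (∑ s ∈ Finset.range N,
          ((N - 1).choose s : ℝ) * c ^ s / ∏ j ∈ Finset.range s, (2 - α + (j : ℝ)))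
        / (∑ s ∈ Finset.range (N + 1),
          (N.choose s : ℝ) * c ^ s / ∏ j ∈ Finset.range s, (1 - α + (j : ℝ))) := by
  have h1α : (0:ℝ) < 1 - α := by linarith
  have hNR : (0:ℝ) < (N:ℝ) := by exact_mod_cast hN
  set S1 : ℝ := ∑ s ∈ Finset.range (N + 1),
      (N.choose s : ℝ) * c ^ s / ∏ j ∈ Finset.range s, (1 - α + (j : ℝ)) with hS1def
  set S2 : ℝ := ∑ s ∈ Finset.range N,
      ((N - 1).choose s : ℝ) * c ^ s / ∏ j ∈ Finset.range s, (2 - α + (j : ℝ)) with hS2def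
  have hprodpos : ∀ k : ℕ, 0 < ∏ j ∈ Finset.range k, (1 - α + (j : ℝ)) := by
    intro k
    apply Finset.prod_pos
    intro j _
    have : (0:ℝ) ≤ (j:ℝ) := Nat.cast_nonneg j
    linarith
  have hS1pos : 0 < S1 := by
    apply Finset.sum_pos
    · intro s hs
      have hch : 0 < (N.choose s : ℝ) := by
        have : 0 < N.choose s := Nat.choose_pos (Nat.lt_succ_iff.mp (Finset.mem_range.mp hs))
        exact_mod_cast this
      positivity
    · exact ⟨0, Finset.mem_range.mpr (Nat.succ_pos N)⟩
  -- w agrees with the summand of S1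
  have hwsum : ∑ k ∈ Finset.range (N + 1), w k = S1 := by
    apply Finset.sum_congr rfl
    intro k hk
    exact hw k (Nat.lt_succ_iff.mp (Finset.mem_range.mp hk))
  -- the first moment
  have hT : ∑ k ∈ Finset.range (N + 1), (k:ℝ) * w k = (N:ℝ) * (c / (1 - α)) * S2 := by
    rw [Finset.sum_range_succ']
    simp only [Nat.cast_zero, zero_mul, add_zero]
    rw [hS2def, Finset.mul_sum]
    apply Finset.sum_congr rfl
    intro s hs
    have hsN : s + 1 ≤ N := Nat.succ_le_of_lt (Finset.mem_range.mp hs)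
    rw [hw (s + 1) hsN]
    have hchoose : ((s:ℝ) + 1) * (N.choose (s + 1) : ℝ) = (N:ℝ) * ((N - 1).choose s : ℝ) := by
      have h := Nat.add_one_mul_choose_eq (N - 1) s
      rw [Nat.sub_add_cancel hN] at h
      have h2 : ((N * (N - 1).choose s : ℕ) : ℝ) = ((N.choose (s + 1) * (s + 1) : ℕ) : ℝ) := by
        exact_mod_cast congrArg (Nat.cast : ℕ → ℝ) h
      push_cast at h2
      linarith
    have hprodsplit : ∏ j ∈ Finset.range (s + 1), (1 - α + (j : ℝ))
        = (1 - α) * ∏ j ∈ Finset.range s, (2 - α + (j : ℝ)) := by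
      rw [Finset.prod_range_succ']
      simp only [Nat.cast_zero, add_zero]
      rw [mul_comm]
      congr 1
      apply Finset.prod_congr rfl
      intro j _
      push_cast
      ring
    have hP2 : 0 < ∏ j ∈ Finset.range s, (2 - α + (j : ℝ)) := by
      apply Finset.prod_pos
      intro j _
      have : (0:ℝ) ≤ (j:ℝ) := Nat.cast_nonneg j
      linarith
    rw [hprodsplit]
    have hca : ((s:ℝ)+1) * ((N.choose (s+1) : ℝ) * c ^ (s+1))
        = (N:ℝ) * c * (((N-1).choose s : ℝ) * c ^ s) := by
      rw [pow_succ]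
      linear_combination c ^ s * c * hchoose
    field_simp
    push_cast
    linear_combination hca
  -- p 0 is constant
  obtain ⟨d, hd⟩ := Polynomial.natDegree_eq_zero.mp (hdeg 0 (Nat.zero_le N))
  have heval : ∀ t : ℝ, (p 0).eval t = d := by
    intro t; rw [← hd]; simp
  have hnorm : d ^ 2 * S1 = 1 := by
    have h := horth 0 (Nat.zero_le N) 0 (Nat.zero_le N)
    simp only [if_pos rfl, heval, if_true] at h
    norm_num at h
    rw [← hwsum, Finset.mul_sum]
    rw [← h]
    apply Finset.sum_congr rfl
    intro k _
    ring
  have hb0 : b 0 = d ^ 2 * ((N:ℝ) * (c / (1 - α)) * S2) := by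
    rw [hb 0 (Nat.zero_le N), ← hT, Finset.mul_sum]
    apply Finset.sum_congr rfl
    intro k _
    rw [heval]
    ring
  have hd2 : d ^ 2 = 1 / S1 := (eq_div_iff hS1pos.ne').mpr hnorm
  have hb0' : b 0 = (N:ℝ) * (c / (1 - α)) * S2 / S1 := by
    rw [hb0, hd2]; ring
  constructor
  · rw [hx 0, ha0]
    simp
  · rw [hy 0, hb0']
    field_simp
    ring
end

section
/- Suppose that for all real x ≠ N the identity t_n/(N−x) + t_{n+1}/(N−x) = (x−b_n)·(x/(c(N−x)) + T_n/(N−x)) − u(x+1) + Σ_{j=0}^{n} (x/(c(N−x)) + T_j/(N−x)) holds, where u(x) = −1 + x(x−α)/(c(N+1−x)). Then c(t_n + t_{n+1} + b_n T_n) = −1 + α + cN + c·Σ_{j=0}^{n} T_j and c·T_n − b_n − 1 + α − c + n = 0. -/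
/-- Consequences of the first compatibility relation of the ladder operators
for the generalized Krawtchouk weight. -/
theorem first_compatibility_consequences
    (N : ℕ) (hN : 1 ≤ N) (α c : ℝ) (hc : c ≠ 0) (n : ℕ)
    (b tn tn1 : ℝ) (T : ℕ → ℝ)
    (h : ∀ x : ℝ, x ≠ (N : ℝ) →
      tn / ((N : ℝ) - x) + tn1 / ((N : ℝ) - x)
        = (x - b) * (x / (c * ((N : ℝ) - x)) + T n / ((N : ℝ) - x))
          - (-1 + (x + 1) * ((x + 1) - α) / (c * ((N : ℝ) + 1 - (x + 1))))
          + ∑ j ∈ Finset.range (n + 1),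
              (x / (c * ((N : ℝ) - x)) + T j / ((N : ℝ) - x))) :
    c * (tn + tn1 + b * T n)
      = -1 + α + c * (N : ℝ) + c * ∑ j ∈ Finset.range (n + 1), T j ∧
    c * T n - b - 1 + α - c + (n : ℝ) = 0 := by
  set S := ∑ j ∈ Finset.range (n + 1), T j with hS
  have key : ∀ x : ℝ, ((N : ℝ) - x) ≠ 0 →
      c * (tn + tn1) = (x - b) * (x + c * T n) + c * ((N : ℝ) - x)
        - (x + 1) * (x + 1 - α) + ((n : ℝ) + 1) * x + c * S := by
    intro x hd
    have hx' := h x (fun he => hd (by rw [he]; ring))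
    simp only [Finset.sum_add_distrib, Finset.sum_const, Finset.card_range, nsmul_eq_mul,
      ← Finset.sum_div, ← hS] at hx'
    have e : (N : ℝ) + 1 - (x + 1) = (N : ℝ) - x := by ring
    rw [e] at hx'
    field_simp at hx'
    have hcc : c ^ 2 * ((N : ℝ) - x) ^ 5 ≠ 0 :=
      mul_ne_zero (pow_ne_zero _ hc) (pow_ne_zero _ hd)
    refine mul_left_cancel₀ hcc ?_
    push_cast at hx'
    linear_combination c ^ 2 * ((N : ℝ) - x) ^ 5 * hx'
  have hd1 : ((N : ℝ) - ((N : ℝ) + 1)) ≠ 0 := by intro hx; nlinarith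
  have hd2 : ((N : ℝ) - ((N : ℝ) + 2)) ≠ 0 := by intro hx; nlinarith
  have k1 := key ((N : ℝ) + 1) hd1
  have k2 := key ((N : ℝ) + 2) hd2
  constructor
  · linear_combination ((N : ℝ) + 2) * k1 - ((N : ℝ) + 1) * k2
  · linear_combination k1 - k2
end

section
/- Under hypotheses (i)–(iii), for all n ≥ 0 one has c(t_n − n)(T_n + T_{n−1}) + t_n(α + n − c − 2) = nN − c·Σ_{j=0}^{n−1} T_j. -/
/-- Consequence of the compatibility relations (equation (4.2.3) in the paper). -/
theorem compatibility_eq_9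
    (N : ℕ) (hN : 1 ≤ N) (α c : ℝ) (hc : c ≠ 0)
    (t b : ℕ → ℝ) (T : ℤ → ℝ) (ht0 : t 0 = 0) (hTm1 : T (-1) = 0)
    (h1 : ∀ n : ℕ, c * (t n + t (n + 1) + b n * T (n : ℤ))
      = -1 + α + c * (N : ℝ) + c * ∑ j ∈ Finset.range (n + 1), T (j : ℤ))
    (h2 : ∀ n : ℕ, c * T (n : ℤ) - b n - 1 + α - c + (n : ℝ) = 0)
    (h3 : ∀ n : ℕ,
      c * (t (n + 1) - ((n : ℝ) + 1)) * T ((n : ℤ) + 1)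
        - c * (t n - (n : ℝ)) * T ((n : ℤ) - 1)
      = -(b n) * t (n + 1) + (b n - 1) * t n + (N : ℝ)) :
    ∀ n : ℕ, c * (t n - (n : ℝ)) * (T (n : ℤ) + T ((n : ℤ) - 1))
      + t n * (α + (n : ℝ) - c - 2)
      = (n : ℝ) * (N : ℝ) - c * ∑ j ∈ Finset.range n, T (j : ℤ) := by
  intro n
  induction n with
  | zero => simp [ht0]
  | succ n ih =>
      have hs : ∑ j ∈ Finset.range (n + 1), T (j : ℤ)
          = (∑ j ∈ Finset.range n, T (j : ℤ)) + T (n : ℤ) :=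
        Finset.sum_range_succ _ n
      have hcast : ((n + 1 : ℕ) : ℤ) = (n : ℤ) + 1 := by push_cast; ring
      have hcast2 : (((n : ℤ) + 1) - 1) = (n : ℤ) := by ring
      rw [hcast, hcast2, hs]
      push_cast
      linear_combination ih + h3 n + (t (n + 1) - t n) * h2 n
end

section
/- Under hypotheses (i)–(iii), for all n ≥ 0 one has (N + c·T_n)·(1 − α − cN + c·t_{n+1} + c·T_n(α − c − 2 + c·T_n)) + c·t_n(N − t_{n+1} + c·T_n) = 0. -/
/-- Consequence of the compatibility relations (equation (4.2.4) in the paper). -/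
theorem compatibility_eq_10
    (N : ℕ) (hN : 1 ≤ N) (α c : ℝ) (hc : c ≠ 0)
    (t b : ℕ → ℝ) (T : ℤ → ℝ) (ht0 : t 0 = 0) (hTm1 : T (-1) = 0)
    (h1 : ∀ n : ℕ, c * (t n + t (n + 1) + b n * T (n : ℤ))
      = -1 + α + c * (N : ℝ) + c * ∑ j ∈ Finset.range (n + 1), T (j : ℤ))
    (h2 : ∀ n : ℕ, c * T (n : ℤ) - b n - 1 + α - c + (n : ℝ) = 0)
    (h3 : ∀ n : ℕ,
      c * (t (n + 1) - ((n : ℝ) + 1)) * T ((n : ℤ) + 1)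
        - c * (t n - (n : ℝ)) * T ((n : ℤ) - 1)
      = -(b n) * t (n + 1) + (b n - 1) * t n + (N : ℝ)) :
    ∀ n : ℕ, ((N : ℝ) + c * T (n : ℤ))
      * (1 - α - c * (N : ℝ) + c * t (n + 1) + c * T (n : ℤ) * (α - c - 2 + c * T (n : ℤ)))
      + c * t n * ((N : ℝ) - t (n + 1) + c * T (n : ℤ)) = 0 := by
  have key : ∀ m : ℕ,
      (((N : ℝ) + c * T (m : ℤ)) *
        (c * t m + c * t (m + 1) + c ^ 2 * T (m : ℤ) ^ 2 + (α - c - 2) * c * T (m : ℤ)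
          + 1 - α - c * N) = c * t m * t (m + 1)) ∧
      (c * (t m - (m : ℝ)) * T ((m : ℤ) - 1)
        = -1 + α + c * N + c * T (m : ℤ) * (2 - α + c - c * T (m : ℤ)) - c * t (m + 1)
          + t m * (2 - α - c * T (m : ℤ)) + (m : ℝ) * ((N : ℝ) - t m)) := by
    intro m
    induction m with
    | zero =>
      have e1 := h1 0
      rw [Finset.sum_range_one] at e1
      have e3 := h2 0
      norm_num at e1 e3 ⊢
      constructor
      · linear_combination
          (1 - c * N - α - 2 * c * T 0 - c ^ 2 * T 0 + α * c * T 0 + c ^ 2 * T 0 ^ 2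
            + c * t 0) * ht0
          + ((N : ℝ) + c * T 0 - t 0) * e1
          + (c * T 0 * ((N : ℝ) + c * T 0 - t 0)) * e3
      · linear_combination (α - c - 2 + c * T 0) * ht0 + (c * t 0) * hTm1 + e1
          + (c * T 0) * e3
    | succ k ih =>
      obtain ⟨hP, hR⟩ := ih
      have e1 := h1 k
      have e2 := h1 (k + 1)
      rw [Finset.sum_range_succ] at e2
      have e3 := h2 k
      have e4 := h2 (k + 1)
      have e5 := h3 k
      push_cast at e1 e2 e3 e4 e5 ⊢
      constructor
      · linear_combination hP + c * (T ((k : ℤ) + 1) - T (k : ℤ)) * (e5 + hR)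
          + ((N : ℝ) + c * T ((k : ℤ) + 1) - t (k + 1)) * (e2 - e1)
          + (-(c * T (k : ℤ)) * ((N : ℝ) + c * T ((k : ℤ) + 1))
              + c * T ((k : ℤ) + 1) * (t (k + 1) - t k) + c * t k * T (k : ℤ)) * e3
          + (c * T ((k : ℤ) + 1) * ((N : ℝ) + c * T ((k : ℤ) + 1) - t (k + 1))) * e4
      · simp only [add_sub_cancel_right]
        linear_combination e5 + hR + (e2 - e1)
          + (t (k + 1) - t k - c * T (k : ℤ)) * e3 + c * T ((k : ℤ) + 1) * e4
  intro n
  linear_combination (key n).1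
end

section
/- Under hypotheses (i)–(iii), for all n ≥ 0 one has t_n·(1 − 2n + (2n − 2 + α)(N+1) + c(n+N)·T_n + c(n+N+c·T_n)·T_{n−1}) = n·(N + c·T_{n−1})(N + c·T_n) + t_n²·(n − 2 + α + c(T_n + T_{n−1})). -/
/-- Consequence of the compatibility relations (equation (4.2.5) in the paper). -/
theorem compatibility_eq_11
    (N : ℕ) (hN : 1 ≤ N) (α c : ℝ) (hc : c ≠ 0)
    (t b : ℕ → ℝ) (T : ℤ → ℝ) (ht0 : t 0 = 0) (hTm1 : T (-1) = 0)
    (h1 : ∀ n : ℕ, c * (t n + t (n + 1) + b n * T (n : ℤ))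
      = -1 + α + c * (N : ℝ) + c * ∑ j ∈ Finset.range (n + 1), T (j : ℤ))
    (h2 : ∀ n : ℕ, c * T (n : ℤ) - b n - 1 + α - c + (n : ℝ) = 0)
    (h3 : ∀ n : ℕ,
      c * (t (n + 1) - ((n : ℝ) + 1)) * T ((n : ℤ) + 1)
        - c * (t n - (n : ℝ)) * T ((n : ℤ) - 1)
      = -(b n) * t (n + 1) + (b n - 1) * t n + (N : ℝ)) :
    ∀ n : ℕ, t n * (1 - 2 * (n : ℝ) + (2 * (n : ℝ) - 2 + α) * ((N : ℝ) + 1)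
        + c * ((n : ℝ) + (N : ℝ)) * T (n : ℤ)
        + c * ((n : ℝ) + (N : ℝ) + c * T (n : ℤ)) * T ((n : ℤ) - 1))
      = (n : ℝ) * ((N : ℝ) + c * T ((n : ℤ) - 1)) * ((N : ℝ) + c * T (n : ℤ))
        + (t n) ^ 2 * ((n : ℝ) - 2 + α + c * (T (n : ℤ) + T ((n : ℤ) - 1))) := by
  suffices H : ∀ n : ℕ,
      (c * t (n + 1) + ((n : ℝ) + α - 2) * t n
        + c * t n * (T (n : ℤ) + T ((n : ℤ) - 1)) - c * (n : ℝ) * T ((n : ℤ) - 1)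
        + c ^ 2 * (T (n : ℤ)) ^ 2 + c * (α - 2 - c) * T (n : ℤ)
        - (n : ℝ) * (N : ℝ) + 1 - α - c * (N : ℝ) = 0)
      ∧ (t n * (1 - 2 * (n : ℝ) + (2 * (n : ℝ) - 2 + α) * ((N : ℝ) + 1)
        + c * ((n : ℝ) + (N : ℝ)) * T (n : ℤ)
        + c * ((n : ℝ) + (N : ℝ) + c * T (n : ℤ)) * T ((n : ℤ) - 1))
      = (n : ℝ) * ((N : ℝ) + c * T ((n : ℤ) - 1)) * ((N : ℝ) + c * T (n : ℤ))
        + (t n) ^ 2 * ((n : ℝ) - 2 + α + c * (T (n : ℤ) + T ((n : ℤ) - 1)))) by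
    exact fun n => (H n).2
  intro n
  induction n with
  | zero =>
    have h10 := h1 0
    rw [Finset.sum_range_one] at h10
    have hm : ((0 : ℤ) - 1) = -1 := by norm_num
    constructor
    · push_cast
      push_cast at h10
      rw [hTm1, ht0]
      linear_combination h10 + c * T 0 * h2 0 - c * ht0
    · push_cast
      rw [hTm1, ht0]
      ring
  | succ n ih =>
    obtain ⟨hI, hE⟩ := ih
    have h1b := h1 (n + 1)
    rw [Finset.sum_range_succ] at h1b
    push_cast at h1b
    have h2b := h2 (n + 1)
    push_cast at h2b
    constructor
    · push_cast
      rw [show ((n : ℤ) + 1 - 1) = (n : ℤ) from by ring]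
      linear_combination hI + h1b - h1 n + h3 n
        + (t (n + 1) - t n - c * T (n : ℤ)) * h2 n
        + (c * T ((n : ℤ) + 1)) * h2b
    · push_cast
      rw [show ((n : ℤ) + 1 - 1) = (n : ℤ) from by ring]
      linear_combination hE + ((N : ℝ) + c * T (n : ℤ) - t (n + 1)) * h3 n
        + (t (n + 1) - t n) * ((N : ℝ) + c * T (n : ℤ) - t (n + 1)) * h2 n
        + (t n - t (n + 1)) * hI
end

section
/- Suppose the real numbers t_n, t_{n+1}, T_{n−1}, T_n satisfy (N + c·T_n)·(1 − α − cN + c·t_{n+1} + c·T_n(α − c − 2 + c·T_n)) + c·t_n(N − t_{n+1} + c·T_n) = 0 and t_n·(1 − 2n + (2n − 2 + α)(N+1) + c(n+N)·T_n + c(n+N+c·T_n)·T_{n−1}) = n·(N + c·T_{n−1})(N + c·T_n) + t_n²·(n − 2 + α + c(T_n + T_{n−1})). Then the quantities x_n = t_n/N, x_{n+1} = t_{n+1}/N, y_{n−1} = −c·T_{n−1}/N − 1, y_n = −c·T_n/N − 1 satisfy cN·(x_n + y_n)(x_{n+1} + y_n) = −y_n(N+1+N y_n)(N+1−α+N y_n)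 and N(N x_n − n)·(x_n + y_n)(x_n + y_{n−1}) = x_n(−N−1+N x_n)(α−N−1+N x_n). -/
/-- The substitution `xₙ = tₙ/N`, `yₙ = -cTₙ/N - 1` turns equations (4.2.11)
and (4.2.12) into the discrete system (gen system). -/
theorem substitution_gives_discrete_system
    (N : ℕ) (hN : 1 ≤ N) (α c : ℝ) (hc : c ≠ 0) (n : ℕ)
    (tn tn1 Tnm1 Tn : ℝ)
    (h1 : ((N : ℝ) + c * Tn)
        * (1 - α - c * (N : ℝ) + c * tn1 + c * Tn * (α - c - 2 + c * Tn))
      + c * tn * ((N : ℝ) - tn1 + c * Tn) = 0)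
    (h2 : tn * (1 - 2 * (n : ℝ) + (2 * (n : ℝ) - 2 + α) * ((N : ℝ) + 1)
        + c * ((n : ℝ) + (N : ℝ)) * Tn
        + c * ((n : ℝ) + (N : ℝ) + c * Tn) * Tnm1)
      = (n : ℝ) * ((N : ℝ) + c * Tnm1) * ((N : ℝ) + c * Tn)
        + tn ^ 2 * ((n : ℝ) - 2 + α + c * (Tn + Tnm1)))
    (xn xn1 ynm1 yn : ℝ)
    (hxn : xn = tn / N) (hxn1 : xn1 = tn1 / N)
    (hynm1 : ynm1 = -(c * Tnm1) / N - 1) (hyn : yn = -(c * Tn) / N - 1) :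
    c * (N : ℝ) * ((xn + yn) * (xn1 + yn))
      = -(yn * ((N : ℝ) + 1 + (N : ℝ) * yn) * ((N : ℝ) + 1 - α + (N : ℝ) * yn)) ∧
    (N : ℝ) * ((N : ℝ) * xn - (n : ℝ)) * ((xn + yn) * (xn + ynm1))
      = xn * (-(N : ℝ) - 1 + (N : ℝ) * xn) * (α - (N : ℝ) - 1 + (N : ℝ) * xn) := by
  have hN0 : (N : ℝ) ≠ 0 := by positivity
  have htn : tn = (N : ℝ) * xn := by rw [hxn]; field_simp
  have htn1 : tn1 = (N : ℝ) * xn1 := by rw [hxn1]; field_simp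
  have hTn : Tn = -((N : ℝ) * (yn + 1)) / c := by
    rw [hyn]; field_simp; ring
  have hTnm1 : Tnm1 = -((N : ℝ) * (ynm1 + 1)) / c := by
    rw [hynm1]; field_simp; ring
  rw [htn, htn1, hTn] at h1
  rw [htn, hTn, hTnm1] at h2
  field_simp at h1 h2
  constructor
  · have key : (c ^ 4 * (N : ℝ)) * (c * (N : ℝ) * ((xn + yn) * (xn1 + yn)))
        = (c ^ 4 * (N : ℝ)) * (-(yn * ((N : ℝ) + 1 + (N : ℝ) * yn) * ((N : ℝ) + 1 - α + (N : ℝ) * yn))) := by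
      linear_combination (-c ^ 4 : ℝ) * h1
    exact mul_left_cancel₀ (by simp [hc, hN0]) key
  · have key : (c ^ 3 * (N : ℝ)) * ((N : ℝ) * ((N : ℝ) * xn - (n : ℝ)) * ((xn + yn) * (xn + ynm1)))
        = (c ^ 3 * (N : ℝ)) * (xn * (-(N : ℝ) - 1 + (N : ℝ) * xn) * (α - (N : ℝ) - 1 + (N : ℝ) * xn)) := by
      linear_combination (c ^ 3 * (N : ℝ)) * h2
    exact mul_left_cancel₀ (by simp [hc, hN0]) key
end

section
/- As ε → 0⁺ the α-dP_IV data degenerate to the generalized Krawtchouk system: with X_n = x_n − 1/ε, Y_n = y_n + 1/ε, Ã = 1/ε, B̃ = −3/ε + (2N+2−α)/N, C̃ = 1/ε − (N+1)/N, D̃ = 1/ε − (N+1−α)/N, Z_n = (2n−1)/(2N) + 1/ε, Z_{n+1/2} = n/N + 1/ε, Γ² = 4c/(Nε) and Δ = 2/ε, one has X_n + Y_n = x_n + y_n for every ε > 0, and the limits (Y_n−Ã)(Y_n−B̃)(Y_n−C̃)(Y_n−D̃)/((Y_n−Z_n)² − Γ²) → −y_n(N+1+N y_n)(N+1−α+N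 y_n)/(cN) and, provided N x_n ≠ n, (X_n+Ã)(X_n+B̃)(X_n+C̃)(X_n+D̃)/((X_n−Z_{n+1/2})² − Δ²) → x_n(−N−1+N x_n)(α−N−1+N x_n)/(N(N x_n − n)) as ε → 0⁺. -/
open Filter Topology

/-- Degeneration of the α-dP_IV data to the generalized Krawtchouk system as
`ε → 0⁺`, with `Xₙ = xₙ - 1/ε`, `Yₙ = yₙ + 1/ε`, `Ã = 1/ε`,
`B̃ = -3/ε + (2N+2-α)/N`, `C̃ = 1/ε - (N+1)/N`, `D̃ = 1/ε - (N+1-α)/N`,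
`Zₙ = (2n-1)/(2N) + 1/ε`, `Z_{n+1/2} = n/N + 1/ε`, `Γ² = 4c/(Nε)`, `Δ = 2/ε`. -/
theorem alpha_dPIV_degeneration
    (N : ℕ) (hN : 1 ≤ N) (n : ℕ) (α c : ℝ) (hc : 0 < c) (xn yn : ℝ) :
    (∀ ε : ℝ, 0 < ε → (xn - 1 / ε) + (yn + 1 / ε) = xn + yn) ∧
    Filter.Tendsto (fun ε : ℝ =>
      ((yn + 1 / ε - 1 / ε)
        * (yn + 1 / ε - (-3 / ε + (2 * (N : ℝ) + 2 - α) / N))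
        * (yn + 1 / ε - (1 / ε - ((N : ℝ) + 1) / N))
        * (yn + 1 / ε - (1 / ε - ((N : ℝ) + 1 - α) / N)))
      / ((yn + 1 / ε - ((2 * (n : ℝ) - 1) / (2 * N) + 1 / ε)) ^ 2
          - 4 * c / ((N : ℝ) * ε)))
      (nhdsWithin 0 (Set.Ioi 0))
      (nhds (-(yn * ((N : ℝ) + 1 + (N : ℝ) * yn) * ((N : ℝ) + 1 - α + (N : ℝ) * yn))
        / (c * N))) ∧
    ((N : ℝ) * xn ≠ (n : ℝ) →
      Filter.Tendsto (fun ε : ℝ =>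
        ((xn - 1 / ε + 1 / ε)
          * (xn - 1 / ε + (-3 / ε + (2 * (N : ℝ) + 2 - α) / N))
          * (xn - 1 / ε + (1 / ε - ((N : ℝ) + 1) / N))
          * (xn - 1 / ε + (1 / ε - ((N : ℝ) + 1 - α) / N)))
        / ((xn - 1 / ε - ((n : ℝ) / N + 1 / ε)) ^ 2 - (2 / ε) ^ 2))
        (nhdsWithin 0 (Set.Ioi 0))
        (nhds (xn * (-(N : ℝ) - 1 + (N : ℝ) * xn) * (α - (N : ℝ) - 1 + (N : ℝ) * xn)
          / ((N : ℝ) * ((N : ℝ) * xn - (n : ℝ)))))) := by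
  have hN0 : (N : ℝ) ≠ 0 := Nat.cast_ne_zero.mpr (by omega)
  have hNpos : (0:ℝ) < N := by positivity
  refine ⟨fun ε hε => by ring, ?_, ?_⟩
  · -- Y part
    set F : ℝ → ℝ := fun ε =>
      (yn * (yn * ε + 4 - (2 * (N:ℝ) + 2 - α) * ε / N)
        * (yn + ((N:ℝ) + 1) / N) * (yn + ((N:ℝ) + 1 - α) / N))
      / ((yn - (2 * (n:ℝ) - 1) / (2 * N)) ^ 2 * ε - 4 * c / N) with hFdef
    have hd0 : (yn - (2 * (n:ℝ) - 1) / (2 * N)) ^ 2 * (0:ℝ) - 4 * c / N ≠ 0 := by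
      have : (0:ℝ) < 4 * c / N := by positivity
      simp only [mul_zero, zero_sub]
      linarith
    have hF : ContinuousAt F 0 := ContinuousAt.div (by fun_prop) (by fun_prop) hd0
    have hT : Filter.Tendsto F (nhdsWithin 0 (Set.Ioi 0)) (nhds (F 0)) :=
      hF.tendsto.mono_left nhdsWithin_le_nhds
    have heq : F =ᶠ[nhdsWithin (0:ℝ) (Set.Ioi 0)] (fun ε : ℝ =>
      ((yn + 1 / ε - 1 / ε)
        * (yn + 1 / ε - (-3 / ε + (2 * (N : ℝ) + 2 - α) / N))
        * (yn + 1 / ε - (1 / ε - ((N : ℝ) + 1) / N))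
        * (yn + 1 / ε - (1 / ε - ((N : ℝ) + 1 - α) / N)))
      / ((yn + 1 / ε - ((2 * (n : ℝ) - 1) / (2 * N) + 1 / ε)) ^ 2
          - 4 * c / ((N : ℝ) * ε))) := by
      filter_upwards [self_mem_nhdsWithin] with ε (hε : 0 < ε)
      have hε0 : ε ≠ 0 := hε.ne'
      have h1 : yn * (yn * ε + 4 - (2 * (N:ℝ) + 2 - α) * ε / N)
          * (yn + ((N:ℝ) + 1) / N) * (yn + ((N:ℝ) + 1 - α) / N)
          = ε * ((yn + 1 / ε - 1 / ε)
        * (yn + 1 / ε - (-3 / ε + (2 * (N : ℝ) + 2 - α) / N))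
        * (yn + 1 / ε - (1 / ε - ((N : ℝ) + 1) / N))
        * (yn + 1 / ε - (1 / ε - ((N : ℝ) + 1 - α) / N))) := by
        field_simp; ring
      have h2 : (yn - (2 * (n:ℝ) - 1) / (2 * N)) ^ 2 * ε - 4 * c / N
          = ε * ((yn + 1 / ε - ((2 * (n : ℝ) - 1) / (2 * N) + 1 / ε)) ^ 2
          - 4 * c / ((N : ℝ) * ε)) := by
        field_simp; ring
      simp only [hFdef, h1, h2, mul_div_mul_left _ _ hε0]
    have hval : F 0 = -(yn * ((N : ℝ) + 1 + (N : ℝ) * yn) * ((N : ℝ) + 1 - α + (N : ℝ) * yn))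
        / (c * N) := by
      simp only [hFdef, mul_zero, add_zero, zero_sub, mul_zero]
      rw [div_eq_div_iff (by simpa using hd0) (by positivity)]
      field_simp
      ring
    exact (hT.congr' heq).congr (fun x => rfl) |>.mono_right (by rw [hval])
  · -- X part
    intro hx
    have hx' : xn - (n:ℝ) / N ≠ 0 := by
      intro h
      apply hx
      field_simp at h
      linarith
    set F : ℝ → ℝ := fun ε =>
      (xn * (xn * ε - 4 + (2 * (N:ℝ) + 2 - α) * ε / N)
        * (xn - ((N:ℝ) + 1) / N) * (xn - ((N:ℝ) + 1 - α) / N))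
      / ((xn - (n:ℝ) / N) ^ 2 * ε - 4 * (xn - (n:ℝ) / N)) with hFdef
    have hd0 : (xn - (n:ℝ) / N) ^ 2 * (0:ℝ) - 4 * (xn - (n:ℝ) / N) ≠ 0 := by
      simp only [mul_zero, zero_sub, ne_eq, neg_eq_zero]
      intro h
      apply hx'
      linarith
    have hF : ContinuousAt F 0 := ContinuousAt.div (by fun_prop) (by fun_prop) hd0
    have hT : Filter.Tendsto F (nhdsWithin 0 (Set.Ioi 0)) (nhds (F 0)) :=
      hF.tendsto.mono_left nhdsWithin_le_nhds
    have heq : F =ᶠ[nhdsWithin (0:ℝ) (Set.Ioi 0)] (fun ε : ℝ =>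
        ((xn - 1 / ε + 1 / ε)
          * (xn - 1 / ε + (-3 / ε + (2 * (N : ℝ) + 2 - α) / N))
          * (xn - 1 / ε + (1 / ε - ((N : ℝ) + 1) / N))
          * (xn - 1 / ε + (1 / ε - ((N : ℝ) + 1 - α) / N)))
        / ((xn - 1 / ε - ((n : ℝ) / N + 1 / ε)) ^ 2 - (2 / ε) ^ 2)) := by
      filter_upwards [self_mem_nhdsWithin] with ε (hε : 0 < ε)
      have hε0 : ε ≠ 0 := hε.ne'
      have h1 : xn * (xn * ε - 4 + (2 * (N:ℝ) + 2 - α) * ε / N)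
          * (xn - ((N:ℝ) + 1) / N) * (xn - ((N:ℝ) + 1 - α) / N)
          = ε * ((xn - 1 / ε + 1 / ε)
          * (xn - 1 / ε + (-3 / ε + (2 * (N : ℝ) + 2 - α) / N))
          * (xn - 1 / ε + (1 / ε - ((N : ℝ) + 1) / N))
          * (xn - 1 / ε + (1 / ε - ((N : ℝ) + 1 - α) / N))) := by
        field_simp; ring
      have h2 : (xn - (n:ℝ) / N) ^ 2 * ε - 4 * (xn - (n:ℝ) / N)
          = ε * ((xn - 1 / ε - ((n : ℝ) / N + 1 / ε)) ^ 2 - (2 / ε) ^ 2) := by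
        field_simp; ring
      simp only [hFdef, h1, h2, mul_div_mul_left _ _ hε0]
    have hval : F 0 = xn * (-(N : ℝ) - 1 + (N : ℝ) * xn) * (α - (N : ℝ) - 1 + (N : ℝ) * xn)
        / ((N : ℝ) * ((N : ℝ) * xn - (n : ℝ))) := by
      have hden2 : (N : ℝ) * ((N : ℝ) * xn - (n : ℝ)) ≠ 0 := by
        apply mul_ne_zero hN0
        intro h
        exact hx (by linarith)
      simp only [hFdef, mul_zero, zero_sub]
      rw [div_eq_div_iff (by simpa using hd0) hden2]
      field_simp
      ring
    exact (hT.congr' heq).mono_right (by rw [hval])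
end

section
/- The recurrence coefficients satisfy the Toda system in the parameter c: for every c > 0, d/dc (a_n(c)²) = (a_n(c)²/c)·(b_n(c) − b_{n−1}(c)) for 1 ≤ n ≤ N, and d/dc b_n(c) = (a_{n+1}(c)² − a_n(c)²)/c for 0 ≤ n ≤ N−1. -/
open Polynomial Finset

namespace TodaAux

noncomputable def ip (N : ℕ) (w : ℕ → ℝ) (q r : Polynomial ℝ) : ℝ :=
  ∑ k ∈ range (N + 1), q.eval (k : ℝ) * r.eval (k : ℝ) * w k

lemma ip_comm (N : ℕ) (w : ℕ → ℝ) (q r : Polynomial ℝ) : ip N w q r = ip N w r q :=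
  Finset.sum_congr rfl fun k _ => by ring

lemma ip_xswap (N : ℕ) (w : ℕ → ℝ) (q r : Polynomial ℝ) :
    ip N w (X * q) r = ip N w (X * r) q := by
  unfold ip
  exact Finset.sum_congr rfl fun k _ => by simp only [eval_mul, eval_X]; ring

lemma span_aux (Q : ℕ → Polynomial ℝ)
    (hdeg : ∀ n, (Q n).natDegree ≤ n)
    (hlc : ∀ n, (Q n).coeff n ≠ 0) :
    ∀ m (q : Polynomial ℝ), q.natDegree ≤ m →
      ∃ lam : ℕ → ℝ, q = ∑ j ∈ range (m + 1), C (lam j) * Q j := by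
  intro m
  induction m with
  | zero =>
    intro q hq
    refine ⟨fun _ => q.coeff 0 / (Q 0).coeff 0, ?_⟩
    have hq0 : q = C (q.coeff 0) := eq_C_of_natDegree_le_zero hq
    have hP0 : Q 0 = C ((Q 0).coeff 0) := eq_C_of_natDegree_le_zero (hdeg 0)
    rw [sum_range_one]
    show q = C (q.coeff 0 / (Q 0).coeff 0) * Q 0
    nth_rewrite 2 [hP0]
    rw [← C_mul, div_mul_cancel₀ _ (hlc 0), ← hq0]
  | succ m ih =>
    intro q hq
    have hd' : (q - C (q.coeff (m+1) / (Q (m+1)).coeff (m+1)) * Q (m+1)).natDegree ≤ m := by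
      rw [natDegree_le_iff_coeff_eq_zero]
      intro i hi
      rw [coeff_sub, coeff_C_mul]
      rcases eq_or_lt_of_le (Nat.succ_le_of_lt hi) with h | h
      · rw [← h, div_mul_cancel₀ _ (hlc (m+1)), sub_self]
      · rw [coeff_eq_zero_of_natDegree_lt (lt_of_le_of_lt hq h),
          coeff_eq_zero_of_natDegree_lt (lt_of_le_of_lt (hdeg (m+1)) h), mul_zero, sub_self]
    obtain ⟨lam, hlam⟩ := ih _ hd'
    refine ⟨fun j => if j = m + 1 then q.coeff (m+1) / (Q (m+1)).coeff (m+1) else lam j, ?_⟩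
    rw [sum_range_succ]
    beta_reduce
    rw [if_pos rfl]
    have hss : (∑ j ∈ range (m+1),
        C (if j = m + 1 then q.coeff (m+1) / (Q (m+1)).coeff (m+1) else lam j) * Q j)
        = ∑ j ∈ range (m+1), C (lam j) * Q j :=
      Finset.sum_congr rfl fun j hj => by
        rw [if_neg (by have := mem_range.1 hj; omega)]
    rw [hss, ← hlam]
    ring

lemma ip_sum_left (N : ℕ) (w : ℕ → ℝ) (s : Finset ℕ) (lam : ℕ → ℝ)
    (f : ℕ → Polynomial ℝ) (r : Polynomial ℝ) :
    ip N w (∑ j ∈ s, C (lam j) * f j) r = ∑ j ∈ s, lam j * ip N w (f j) r := by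
  unfold ip
  calc ∑ k ∈ range (N+1), (∑ j ∈ s, C (lam j) * f j).eval (k:ℝ) * r.eval (k:ℝ) * w k
      = ∑ k ∈ range (N+1), ∑ j ∈ s, lam j * ((f j).eval (k:ℝ) * r.eval (k:ℝ) * w k) := by
        refine Finset.sum_congr rfl fun k _ => ?_
        rw [eval_finset_sum, sum_mul, sum_mul]
        exact Finset.sum_congr rfl fun j _ => by simp only [eval_mul, eval_C]; ring
    _ = ∑ j ∈ s, lam j * ∑ k ∈ range (N+1), (f j).eval (k:ℝ) * r.eval (k:ℝ) * w k := by
        rw [Finset.sum_comm]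
        exact Finset.sum_congr rfl fun j _ => (Finset.mul_sum _ _ _).symm


section
variable (N : ℕ) (w : ℕ → ℝ) (Q : ℕ → Polynomial ℝ)
variable (hdeg : ∀ n, (Q n).natDegree ≤ n) (hlc : ∀ n, (Q n).coeff n ≠ 0)
variable (horth : ∀ m, m ≤ N → ∀ n, n ≤ N → ip N w (Q m) (Q n) = if m = n then 1 else 0)

include hdeg hlc horth

lemma ip_zero (q : Polynomial ℝ) (m n : ℕ) (hq : q.natDegree ≤ m) (hmn : m < n) (hn : n ≤ N) :
    ip N w q (Q n) = 0 := by
  obtain ⟨lam, hlam⟩ := span_aux Q hdeg hlc m q hq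
  rw [hlam, ip_sum_left]
  refine Finset.sum_eq_zero fun j hj => ?_
  have hj' := mem_range.1 hj
  rw [horth j (by omega) n hn, if_neg (by omega), mul_zero]

lemma ip_expand (q : Polynomial ℝ) (hq : q.natDegree ≤ N) (x : ℝ) :
    q.eval x = ∑ j ∈ range (N + 1), ip N w q (Q j) * (Q j).eval x := by
  obtain ⟨lam, hlam⟩ := span_aux Q hdeg hlc N q hq
  have hco : ∀ i ∈ range (N + 1), ip N w q (Q i) * (Q i).eval x = lam i * (Q i).eval x := by
    intro i hi
    have hi' := mem_range.1 hi
    have : ip N w q (Q i) = lam i := by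
      rw [hlam, ip_sum_left]
      rw [Finset.sum_eq_single_of_mem i hi]
      · rw [horth i (by omega) i (by omega), if_pos rfl, mul_one]
      · intro j hj hne
        rw [horth j (by have := mem_range.1 hj; omega) i (by omega), if_neg hne, mul_zero]
    rw [this]
  rw [Finset.sum_congr rfl hco]
  conv_lhs => rw [hlam]
  rw [eval_finset_sum]
  exact Finset.sum_congr rfl fun j _ => by simp only [eval_mul, eval_C]

lemma ip_expand_left (q r : Polynomial ℝ) (hq : q.natDegree ≤ N) :
    ip N w q r = ∑ j ∈ range (N + 1), ip N w q (Q j) * ip N w (Q j) r := by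
  unfold ip
  calc ∑ k ∈ range (N+1), q.eval (k:ℝ) * r.eval (k:ℝ) * w k
      = ∑ k ∈ range (N+1), ∑ j ∈ range (N+1),
          ip N w q (Q j) * ((Q j).eval (k:ℝ) * r.eval (k:ℝ) * w k) := by
        refine Finset.sum_congr rfl fun k _ => ?_
        rw [ip_expand N w Q hdeg hlc horth q hq (k:ℝ), sum_mul, sum_mul]
        exact Finset.sum_congr rfl fun j _ => by ring
    _ = _ := by
        rw [Finset.sum_comm]
        exact Finset.sum_congr rfl fun j _ => (Finset.mul_sum _ _ _).symm

lemma ip_subst (q r : Polynomial ℝ) (hq : q.natDegree ≤ N) :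
    ip N w (X * q) r = ∑ j ∈ range (N + 1), ip N w q (Q j) * ip N w (X * Q j) r := by
  unfold ip
  calc ∑ k ∈ range (N+1), (X * q).eval (k:ℝ) * r.eval (k:ℝ) * w k
      = ∑ k ∈ range (N+1), ∑ j ∈ range (N+1),
          ip N w q (Q j) * ((X * Q j).eval (k:ℝ) * r.eval (k:ℝ) * w k) := by
        refine Finset.sum_congr rfl fun k _ => ?_
        simp only [eval_mul, eval_X]
        rw [ip_expand N w Q hdeg hlc horth q hq (k:ℝ), mul_comm (k:ℝ), sum_mul, sum_mul, sum_mul]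
        exact Finset.sum_congr rfl fun j _ => by ring
    _ = _ := by
        rw [Finset.sum_comm]
        exact Finset.sum_congr rfl fun j _ => (Finset.mul_sum _ _ _).symm

end

lemma sum_one (M s : ℕ) (g : ℕ → ℝ) (hs : s < M + 1)
    (h : ∀ j, j < M + 1 → j ≠ s → g j = 0) :
    ∑ j ∈ range (M + 1), g j = g s :=
  Finset.sum_eq_single_of_mem s (mem_range.2 hs) fun j hj hne => h j (mem_range.1 hj) hne

lemma sum_two (M s t : ℕ) (g : ℕ → ℝ) (hs : s < M + 1) (ht : t < M + 1) (hst : s ≠ t)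
    (h : ∀ j, j < M + 1 → j ≠ s → j ≠ t → g j = 0) :
    ∑ j ∈ range (M + 1), g j = g s + g t := by
  have hsub : ({s, t} : Finset ℕ) ⊆ range (M + 1) := by
    intro x hx
    rcases Finset.mem_insert.1 hx with rfl | hx
    · exact mem_range.2 hs
    · rw [Finset.mem_singleton.1 hx]; exact mem_range.2 ht
  rw [← Finset.sum_subset hsub (fun x hx hnx => by
    have h1 : x ≠ s ∧ x ≠ t := by
      constructor <;> rintro rfl <;> simp at hnx
    exact h x (mem_range.1 hx) h1.1 h1.2)]
  exact Finset.sum_pair hst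

lemma sum_three (M s t u : ℕ) (g : ℕ → ℝ) (hs : s < M + 1) (ht : t < M + 1) (hu : u < M + 1)
    (hst : s ≠ t) (hsu : s ≠ u) (htu : t ≠ u)
    (h : ∀ j, j < M + 1 → j ≠ s → j ≠ t → j ≠ u → g j = 0) :
    ∑ j ∈ range (M + 1), g j = g s + g t + g u := by
  have hsub : ({s, t, u} : Finset ℕ) ⊆ range (M + 1) := by
    intro x hx
    simp only [Finset.mem_insert, Finset.mem_singleton] at hx
    rcases hx with rfl | rfl | rfl
    · exact mem_range.2 hs
    · exact mem_range.2 ht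
    · exact mem_range.2 hu
  rw [← Finset.sum_subset hsub (fun x hx hnx => by
    simp only [Finset.mem_insert, Finset.mem_singleton, not_or] at hnx
    exact h x (mem_range.1 hx) hnx.1 hnx.2.1 hnx.2.2)]
  rw [Finset.sum_insert (by simp [hst, hsu]), Finset.sum_pair htu, add_assoc]

lemma static (N : ℕ) (w : ℕ → ℝ) (Q pd : ℕ → Polynomial ℝ) (c : ℝ) (hc : c ≠ 0)
    (hdeg : ∀ n, (Q n).natDegree ≤ n) (hlc : ∀ n, (Q n).coeff n ≠ 0)
    (horth : ∀ m, m ≤ N → ∀ n, n ≤ N → ip N w (Q m) (Q n) = if m = n then 1 else 0)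
    (hpd : ∀ n, n ≤ N → (pd n).natDegree ≤ n)
    (hstar : ∀ m, m ≤ N → ∀ n, n ≤ N →
      ip N w (pd m) (Q n) + ip N w (Q m) (pd n) = -(1/c) * ip N w (X * Q m) (Q n))
    (A B : ℕ → ℝ)
    (hA0 : A 0 = 0)
    (hA : ∀ n, 1 ≤ n → n ≤ N → A n = ip N w (X * Q n) (Q (n - 1)))
    (hB : ∀ n, n ≤ N → B n = ip N w (X * Q n) (Q n)) :
    (∀ n, 1 ≤ n → n ≤ N →
      ip N w (X * pd n) (Q (n - 1)) + ip N w (X * pd (n - 1)) (Q n)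
        + (1/c) * ip N w (X * Q n) (X * Q (n - 1)) = A n * (B n - B (n - 1)) / (2 * c)) ∧
    (∀ n, n + 1 ≤ N →
      2 * ip N w (X * pd n) (Q n) + (1/c) * ip N w (X * Q n) (X * Q n)
        = (A (n + 1) ^ 2 - A n ^ 2) / c) := by
  -- degree of X * Q j
  have hxdeg : ∀ j, (X * Q j).natDegree ≤ j + 1 := fun j =>
    le_trans (natDegree_mul_le) (by rw [natDegree_X]; have := hdeg j; omega)
  -- vanishing of ⟪X·Q j, Q n⟫ for j+1 < n
  have hxz : ∀ j n, j + 1 < n → n ≤ N → ip N w (X * Q j) (Q n) = 0 := fun j n hjn hn =>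
    ip_zero N w Q hdeg hlc horth (X * Q j) (j + 1) n (hxdeg j) hjn hn
  have hxz' : ∀ j n, n + 1 < j → j ≤ N → ip N w (X * Q n) (Q j) = 0 := fun j n hjn hj =>
    ip_zero N w Q hdeg hlc horth (X * Q n) (n + 1) j (hxdeg n) hjn hj
  -- K1
  have K1 : ∀ n, n ≤ N → ip N w (pd n) (Q n) = -(B n) / (2 * c) := by
    intro n hn
    have h := hstar n hn n hn
    rw [ip_comm N w (Q n) (pd n), ← hB n hn] at h
    field_simp at h ⊢
    linarith
  -- K2
  have K2 : ∀ n, 1 ≤ n → n ≤ N → ip N w (pd n) (Q (n - 1)) = -(A n) / c := by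
    intro n h1 hn
    have h := hstar (n - 1) (by omega) n hn
    have hz : ip N w (pd (n - 1)) (Q n) = 0 :=
      ip_zero N w Q hdeg hlc horth (pd (n - 1)) (n - 1) n (hpd (n - 1) (by omega)) (by omega) hn
    have hx : ip N w (X * Q (n - 1)) (Q n) = A n := by
      rw [hA n h1 hn, ip_xswap]
    rw [hz, zero_add, ip_comm, hx] at h
    rw [h]; ring
  -- K3
  have K3 : ∀ n, n ≤ N → ∀ j, j + 1 < n → ip N w (pd n) (Q j) = 0 := by
    intro n hn j hj
    have h := hstar j (by omega) n hn
    have h1 : ip N w (pd j) (Q n) = 0 :=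
      ip_zero N w Q hdeg hlc horth (pd j) j n (hpd j (by omega)) (by omega) hn
    have h2 : ip N w (X * Q j) (Q n) = 0 := hxz j n hj hn
    rw [h1, zero_add, ip_comm, h2, mul_zero] at h
    exact h
  -- K4
  have K4 : ∀ n, n ≤ N → ∀ j, j ≤ N → n < j → ip N w (pd n) (Q j) = 0 := fun n hn j hj hnj =>
    ip_zero N w Q hdeg hlc horth (pd n) n j (hpd n hn) hnj hj
  constructor
  · -- part 1
    intro n h1 hn
    have hU1 : ip N w (X * pd n) (Q (n - 1)) = -(A n) / c * B (n - 1) + -(B n) / (2 * c) * A n := by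
      rw [ip_subst N w Q hdeg hlc horth (pd n) (Q (n - 1)) (le_trans (hpd n hn) hn)]
      rw [sum_two N (n - 1) n _ (by omega) (by omega) (by omega) ?_]
      · rw [K2 n h1 hn, K1 n hn, hB (n - 1) (by omega)]
        have : ip N w (X * Q n) (Q (n - 1)) = A n := (hA n h1 hn).symm
        rw [this]
      · intro j hj hj1 hj2
        rcases lt_or_ge j n with h' | h'
        · rw [K3 n hn j (by omega), zero_mul]
        · rw [K4 n hn j (by omega) (by omega), zero_mul]
    have hU2 : ip N w (X * pd (n - 1)) (Q n) = -(B (n - 1)) / (2 * c) * A n := by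
      rw [ip_subst N w Q hdeg hlc horth (pd (n - 1)) (Q n) (le_trans (hpd (n - 1) (by omega)) (by omega))]
      rw [sum_one N (n - 1) _ (by omega) ?_]
      · rw [K1 (n - 1) (by omega)]
        have : ip N w (X * Q (n - 1)) (Q n) = A n := by rw [hA n h1 hn, ip_xswap]
        rw [this]
      · intro j hj hj1
        rcases lt_or_ge j n with h' | h'
        · rw [hxz j n (by omega) hn, mul_zero]
        · rw [K4 (n - 1) (by omega) j (by omega) (by omega), zero_mul]
    have hU3 : ip N w (X * Q n) (X * Q (n - 1)) = A n * B (n - 1) + A n * B n := by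
      rw [ip_comm, ip_expand_left N w Q hdeg hlc horth (X * Q (n - 1)) (X * Q n)
        (le_trans (hxdeg (n - 1)) (by omega))]
      rw [sum_two N (n - 1) n _ (by omega) (by omega) (by omega) ?_]
      · have e1 : ip N w (X * Q (n - 1)) (Q (n - 1)) = B (n - 1) := (hB (n - 1) (by omega)).symm
        have e2 : ip N w (Q (n - 1)) (X * Q n) = A n := by rw [ip_comm, ← hA n h1 hn]
        have e3 : ip N w (X * Q (n - 1)) (Q n) = A n := by rw [hA n h1 hn, ip_xswap]
        have e4 : ip N w (Q n) (X * Q n) = B n := by rw [ip_comm, ← hB n hn]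
        rw [e1, e2, e3, e4]
        ring
      · intro j hj hj1 hj2
        rcases lt_or_ge j n with h' | h'
        · have : ip N w (Q j) (X * Q n) = 0 := by
            rw [ip_comm, ip_xswap]
            exact hxz j n (by omega) hn
          rw [this, mul_zero]
        · rw [ip_zero N w Q hdeg hlc horth (X * Q (n - 1)) n j
            (le_trans (hxdeg (n - 1)) (by omega)) (by omega) (by omega), zero_mul]
    rw [hU1, hU2, hU3]
    field_simp
    ring
  · -- part 2
    intro n hn1
    have hn : n ≤ N := by omega
    have hT1 : ip N w (X * pd n) (Q n) = -(A n) / c * A n + -(B n) / (2 * c) * B n := by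
      rw [ip_subst N w Q hdeg hlc horth (pd n) (Q n) (le_trans (hpd n hn) hn)]
      rcases Nat.eq_zero_or_pos n with rfl | hpos
      · rw [sum_one N 0 _ (by omega) ?_]
        · rw [K1 0 hn, ← hB 0 hn, hA0]
          ring
        · intro j hj hj1
          rw [K4 0 hn j (by omega) (by omega), zero_mul]
      · rw [sum_two N (n - 1) n _ (by omega) (by omega) (by omega) ?_]
        · have hxa : ip N w (X * Q (n - 1)) (Q n) = A n := by rw [hA n hpos hn, ip_xswap]
          rw [K2 n hpos hn, K1 n hn, ← hB n hn, hxa]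
        · intro j hj hj1 hj2
          rcases lt_or_ge j n with h' | h'
          · rw [K3 n hn j (by omega), zero_mul]
          · rw [K4 n hn j (by omega) (by omega), zero_mul]
    have hT2 : ip N w (X * Q n) (X * Q n) = A (n + 1) ^ 2 + B n ^ 2 + A n ^ 2 := by
      rw [ip_expand_left N w Q hdeg hlc horth (X * Q n) (X * Q n)
        (le_trans (hxdeg n) hn1)]
      have eA1 : ip N w (X * Q n) (Q (n + 1)) = A (n + 1) := by
        rw [hA (n + 1) (by omega) hn1, Nat.add_sub_cancel, ip_xswap]
      have eB : ip N w (X * Q n) (Q n) = B n := (hB n hn).symm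
      rcases Nat.eq_zero_or_pos n with rfl | hpos
      · rw [sum_two N 0 1 _ (by omega) (by omega) (by omega) ?_]
        · rw [ip_comm N w (Q 0) (X * Q 0), ip_comm N w (Q 1) (X * Q 0), eB, eA1, hA0]
          ring
        · intro j hj hj1 hj2
          rw [hxz' j 0 (by omega) (by omega), zero_mul]
      · rw [sum_three N (n - 1) n (n + 1) _ (by omega) (by omega) (by omega)
          (by omega) (by omega) (by omega) ?_]
        · have eA : ip N w (X * Q n) (Q (n - 1)) = A n := (hA n hpos hn).symm
          rw [ip_comm N w (Q (n-1)) (X * Q n), ip_comm N w (Q n) (X * Q n),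
            ip_comm N w (Q (n+1)) (X * Q n), eA, eB, eA1]
          ring
        · intro j hj hj1 hj2 hj3
          rcases lt_or_ge j n with h' | h'
          · have : ip N w (X * Q n) (Q j) = 0 := by
              rw [ip_xswap]
              exact hxz j n (by omega) hn
            rw [this, zero_mul]
          · rw [hxz' j n (by omega) (by omega), zero_mul]
    rw [hT1, hT2]
    field_simp
    ring

end TodaAux
/-- The Toda system for the recurrence coefficients of orthonormal polynomials
with respect to the weight `w(k;c) = W(k) c^k` on `{0,…,N}`. -/
theorem toda_system
    (N : ℕ) (hN : 1 ≤ N)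
    (W : ℕ → ℝ) (hW : ∀ k, k ≤ N → 0 < W k)
    (p : ℕ → ℝ → Polynomial ℝ)
    (hdeg : ∀ c : ℝ, 0 < c → ∀ n, n ≤ N → (p n c).natDegree = n)
    (hlead : ∀ c : ℝ, 0 < c → ∀ n, n ≤ N → 0 < (p n c).leadingCoeff)
    (horth : ∀ c : ℝ, 0 < c → ∀ m, m ≤ N → ∀ n, n ≤ N →
      ∑ k ∈ Finset.range (N + 1),
        (p m c).eval (k : ℝ) * (p n c).eval (k : ℝ) * (W k * c ^ k)
        = if m = n then 1 else 0)
    (hdiff : ∀ n, n ≤ N → ∀ i : ℕ,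
      DifferentiableOn ℝ (fun c : ℝ => (p n c).coeff i) (Set.Ioi 0))
    (a b : ℕ → ℝ → ℝ)
    (ha0 : ∀ c : ℝ, a 0 c = 0)
    (haN1 : ∀ c : ℝ, a (N + 1) c = 0)
    (ha : ∀ n, 1 ≤ n → n ≤ N → ∀ c : ℝ, 0 < c →
      a n c = ∑ k ∈ Finset.range (N + 1),
        (k : ℝ) * (p n c).eval (k : ℝ) * (p (n - 1) c).eval (k : ℝ) * (W k * c ^ k))
    (hb : ∀ n, n ≤ N → ∀ c : ℝ, 0 < c →
      b n c = ∑ k ∈ Finset.range (N + 1),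
        (k : ℝ) * ((p n c).eval (k : ℝ)) ^ 2 * (W k * c ^ k)) :
    ∀ c : ℝ, 0 < c →
      (∀ n, 1 ≤ n → n ≤ N →
        HasDerivAt (fun s : ℝ => (a n s) ^ 2)
          ((a n c) ^ 2 / c * (b n c - b (n - 1) c)) c) ∧
      (∀ n, n + 1 ≤ N →
        HasDerivAt (b n) (((a (n + 1) c) ^ 2 - (a n c) ^ 2) / c) c) := by
  intro c hc
  have hcne : c ≠ 0 := ne_of_gt hc
  have hmem : Set.Ioi (0:ℝ) ∈ nhds c := Ioi_mem_nhds hc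
  set w : ℕ → ℝ := fun k => W k * c ^ k with hw
  set Q : ℕ → Polynomial ℝ := fun n => if n ≤ N then p n c else Polynomial.X ^ n with hQdef
  have hQ : ∀ n, n ≤ N → Q n = p n c := fun n hn => by simp [hQdef, hn]
  have hQdeg : ∀ n, (Q n).natDegree ≤ n := by
    intro n
    by_cases hn : n ≤ N
    · rw [hQ n hn, hdeg c hc n hn]
    · simp [hQdef, hn]
  have hQlc : ∀ n, (Q n).coeff n ≠ 0 := by
    intro n
    by_cases hn : n ≤ N
    · rw [hQ n hn]
      have h1 := hdeg c hc n hn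
      have h2 := hlead c hc n hn
      have h3 : (p n c).coeff ((p n c).natDegree) ≠ 0 := by
        rw [Polynomial.coeff_natDegree]; exact ne_of_gt h2
      rwa [h1] at h3
    · simp [hQdef, hn]
  have horthQ : ∀ m, m ≤ N → ∀ n, n ≤ N →
      TodaAux.ip N w (Q m) (Q n) = if m = n then 1 else 0 := by
    intro m hm n hn
    simp only [TodaAux.ip, hQ m hm, hQ n hn, hw]
    exact horth c hc m hm n hn
  set d : ℕ → ℕ → ℝ := fun n i => deriv (fun s => (p n s).coeff i) c with hd
  set pd : ℕ → Polynomial ℝ :=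
    fun n => ∑ i ∈ Finset.range (N+1), Polynomial.C (d n i) * Polynomial.X ^ i with hpddef
  have hHd : ∀ n, n ≤ N → ∀ i, HasDerivAt (fun s => (p n s).coeff i) (d n i) c :=
    fun n hn i => ((hdiff n hn i).differentiableAt hmem).hasDerivAt
  have hd0 : ∀ n, n ≤ N → ∀ i, n < i → d n i = 0 := by
    intro n hn i hi
    have hev : (fun s => (p n s).coeff i) =ᶠ[nhds c] (fun _ => (0:ℝ)) :=
      Filter.eventuallyEq_of_mem hmem (fun s hs =>
        Polynomial.coeff_eq_zero_of_natDegree_lt (by rw [hdeg s hs n hn]; exact hi))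
    show deriv (fun s => (p n s).coeff i) c = 0
    rw [hev.deriv_eq, deriv_const]
  have hpdeval : ∀ n (x : ℝ),
      (pd n).eval x = ∑ i ∈ Finset.range (N+1), d n i * x ^ i := by
    intro n x
    simp [hpddef, Polynomial.eval_finset_sum]
  have hpddeg : ∀ n, n ≤ N → (pd n).natDegree ≤ n := by
    intro n hn
    rw [Polynomial.natDegree_le_iff_coeff_eq_zero]
    intro i hi
    simp only [hpddef]
    simp only [Polynomial.finset_sum_coeff, Polynomial.coeff_C_mul, Polynomial.coeff_X_pow]
    refine Finset.sum_eq_zero fun j hj => ?_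
    by_cases h : i = j
    · subst h; rw [hd0 n hn i hi]; simp
    · simp [h]
  have heq : ∀ n, n ≤ N → ∀ s : ℝ, s ∈ Set.Ioi (0:ℝ) → ∀ k : ℕ,
      (∑ i ∈ Finset.range (N+1), (p n s).coeff i * (k:ℝ) ^ i) = (p n s).eval (k:ℝ) := by
    intro n hn s hs k
    exact (Polynomial.eval_eq_sum_range' (by rw [hdeg s hs n hn]; omega) _).symm
  have hEd : ∀ n, n ≤ N → ∀ k : ℕ,
      HasDerivAt (fun s => ∑ i ∈ Finset.range (N+1), (p n s).coeff i * (k:ℝ) ^ i)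
        ((pd n).eval (k:ℝ)) c := by
    intro n hn k
    rw [hpdeval]
    exact HasDerivAt.fun_sum fun i _ => (hHd n hn i).mul_const _
  have hck : ∀ k : ℕ, W k * ((k:ℝ) * c ^ (k-1)) = (k:ℝ) / c * (W k * c ^ k) := by
    intro k
    cases k with
    | zero => simp
    | succ k =>
      rw [Nat.add_sub_cancel, pow_succ]
      field_simp
  have hstarQ : ∀ m, m ≤ N → ∀ n, n ≤ N →
      TodaAux.ip N w (pd m) (Q n) + TodaAux.ip N w (Q m) (pd n)
        = -(1/c) * TodaAux.ip N w (Polynomial.X * Q m) (Q n) := by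
    intro m hm n hn
    have hG : HasDerivAt
        (fun s => ∑ k ∈ Finset.range (N+1),
          (∑ i ∈ Finset.range (N+1), (p m s).coeff i * (k:ℝ) ^ i) *
          (∑ i ∈ Finset.range (N+1), (p n s).coeff i * (k:ℝ) ^ i) * (W k * s ^ k))
        (∑ k ∈ Finset.range (N+1),
          (((pd m).eval (k:ℝ) * (p n c).eval (k:ℝ) + (p m c).eval (k:ℝ) * (pd n).eval (k:ℝ))
              * (W k * c ^ k)
            + (p m c).eval (k:ℝ) * (p n c).eval (k:ℝ) * (W k * ((k:ℝ) * c ^ (k-1))))) c := by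
      apply HasDerivAt.fun_sum
      intro k _
      have h2 := ((hEd m hm k).fun_mul (hEd n hn k)).fun_mul ((hasDerivAt_pow k c).const_mul (W k))
      rw [heq m hm c hc k, heq n hn c hc k] at h2
      exact h2
    have hGc : HasDerivAt (fun _ : ℝ => (if m = n then (1:ℝ) else 0)) 0 c := hasDerivAt_const _ _
    have hGeq : (fun s : ℝ => ∑ k ∈ Finset.range (N+1),
          (∑ i ∈ Finset.range (N+1), (p m s).coeff i * (k:ℝ) ^ i) *
          (∑ i ∈ Finset.range (N+1), (p n s).coeff i * (k:ℝ) ^ i) * (W k * s ^ k))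
        =ᶠ[nhds c] (fun _ => (if m = n then (1:ℝ) else 0)) := by
      refine Filter.eventuallyEq_of_mem hmem fun s hs => ?_
      rw [← horth s hs m hm n hn]
      exact Finset.sum_congr rfl fun k _ => by rw [heq m hm s hs k, heq n hn s hs k]
    have hzero := (hGc.congr_of_eventuallyEq hGeq).unique hG
    have hrw : TodaAux.ip N w (pd m) (Q n) + TodaAux.ip N w (Q m) (pd n)
        + (1/c) * TodaAux.ip N w (Polynomial.X * Q m) (Q n)
        = ∑ k ∈ Finset.range (N+1),
          (((pd m).eval (k:ℝ) * (p n c).eval (k:ℝ) + (p m c).eval (k:ℝ) * (pd n).eval (k:ℝ))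
              * (W k * c ^ k)
            + (p m c).eval (k:ℝ) * (p n c).eval (k:ℝ) * (W k * ((k:ℝ) * c ^ (k-1)))) := by
      simp only [TodaAux.ip, hQ m hm, hQ n hn, hw, Polynomial.eval_mul, Polynomial.eval_X,
        Finset.mul_sum, ← Finset.sum_add_distrib]
      refine Finset.sum_congr rfl fun k _ => ?_
      rw [hck k]
      ring
    rw [← hzero] at hrw
    linarith
  have hAip : ∀ n, 1 ≤ n → n ≤ N →
      a n c = TodaAux.ip N w (Polynomial.X * Q n) (Q (n-1)) := by
    intro n h1 hn
    rw [ha n h1 hn c hc]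
    simp only [TodaAux.ip, hQ n hn, hQ (n-1) (by omega), hw, Polynomial.eval_mul,
      Polynomial.eval_X]
  have hBip : ∀ n, n ≤ N → b n c = TodaAux.ip N w (Polynomial.X * Q n) (Q n) := by
    intro n hn
    rw [hb n hn c hc]
    simp only [TodaAux.ip, hQ n hn, hw, Polynomial.eval_mul, Polynomial.eval_X]
    exact Finset.sum_congr rfl fun k _ => by ring
  obtain ⟨HS1, HS2⟩ := TodaAux.static N w Q pd c hcne hQdeg hQlc horthQ hpddeg hstarQ
    (fun n => a n c) (fun n => b n c) (ha0 c) hAip hBip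
  constructor
  · -- Toda equation for a_n^2
    intro n h1 hn
    have hFa : HasDerivAt
        (fun s => ∑ k ∈ Finset.range (N+1),
          (k:ℝ) * ((∑ i ∈ Finset.range (N+1), (p n s).coeff i * (k:ℝ) ^ i) *
            (∑ i ∈ Finset.range (N+1), (p (n-1) s).coeff i * (k:ℝ) ^ i)) * (W k * s ^ k))
        (∑ k ∈ Finset.range (N+1),
          ((k:ℝ) * ((pd n).eval (k:ℝ) * (p (n-1) c).eval (k:ℝ)
              + (p n c).eval (k:ℝ) * (pd (n-1)).eval (k:ℝ)) * (W k * c ^ k)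
            + (k:ℝ) * ((p n c).eval (k:ℝ) * (p (n-1) c).eval (k:ℝ))
              * (W k * ((k:ℝ) * c ^ (k-1))))) c := by
      apply HasDerivAt.fun_sum
      intro k _
      have h2 := (((hEd n hn k).fun_mul (hEd (n-1) (by omega) k)).const_mul (k:ℝ)).fun_mul
        ((hasDerivAt_pow k c).const_mul (W k))
      rw [heq n hn c hc k, heq (n-1) (by omega) c hc k] at h2
      exact h2
    have hae : (a n) =ᶠ[nhds c]
        (fun s => ∑ k ∈ Finset.range (N+1),
          (k:ℝ) * ((∑ i ∈ Finset.range (N+1), (p n s).coeff i * (k:ℝ) ^ i) *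
            (∑ i ∈ Finset.range (N+1), (p (n-1) s).coeff i * (k:ℝ) ^ i)) * (W k * s ^ k)) := by
      refine Filter.eventuallyEq_of_mem hmem fun s hs => ?_
      rw [ha n h1 hn s hs]
      exact Finset.sum_congr rfl fun k _ => by
        rw [heq n hn s hs k, heq (n-1) (by omega) s hs k]; ring
    have hDa : TodaAux.ip N w (Polynomial.X * pd n) (Q (n-1))
        + TodaAux.ip N w (Polynomial.X * pd (n-1)) (Q n)
        + (1/c) * TodaAux.ip N w (Polynomial.X * Q n) (Polynomial.X * Q (n-1))
        = ∑ k ∈ Finset.range (N+1),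
          ((k:ℝ) * ((pd n).eval (k:ℝ) * (p (n-1) c).eval (k:ℝ)
              + (p n c).eval (k:ℝ) * (pd (n-1)).eval (k:ℝ)) * (W k * c ^ k)
            + (k:ℝ) * ((p n c).eval (k:ℝ) * (p (n-1) c).eval (k:ℝ))
              * (W k * ((k:ℝ) * c ^ (k-1)))) := by
      simp only [TodaAux.ip, hQ n hn, hQ (n-1) (by omega), hw, Polynomial.eval_mul,
        Polynomial.eval_X, Finset.mul_sum, ← Finset.sum_add_distrib]
      refine Finset.sum_congr rfl fun k _ => ?_
      rw [hck k]
      ring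
    have hkey : HasDerivAt (a n) (a n c * (b n c - b (n-1) c) / (2 * c)) c := by
      have := hFa.congr_of_eventuallyEq hae
      rw [← hDa, HS1 n h1 hn] at this
      exact this
    have hsq : HasDerivAt (fun s => (a n s) ^ 2) _ c := hkey.fun_pow 2
    convert hsq using 1
    push_cast
    field_simp
  · -- Toda equation for b_n
    intro n hn1
    have hn : n ≤ N := by omega
    have hFb : HasDerivAt
        (fun s => ∑ k ∈ Finset.range (N+1),
          (k:ℝ) * ((∑ i ∈ Finset.range (N+1), (p n s).coeff i * (k:ℝ) ^ i) *
            (∑ i ∈ Finset.range (N+1), (p n s).coeff i * (k:ℝ) ^ i)) * (W k * s ^ k))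
        (∑ k ∈ Finset.range (N+1),
          ((k:ℝ) * ((pd n).eval (k:ℝ) * (p n c).eval (k:ℝ)
              + (p n c).eval (k:ℝ) * (pd n).eval (k:ℝ)) * (W k * c ^ k)
            + (k:ℝ) * ((p n c).eval (k:ℝ) * (p n c).eval (k:ℝ))
              * (W k * ((k:ℝ) * c ^ (k-1))))) c := by
      apply HasDerivAt.fun_sum
      intro k _
      have h2 := (((hEd n hn k).fun_mul (hEd n hn k)).const_mul (k:ℝ)).fun_mul
        ((hasDerivAt_pow k c).const_mul (W k))
      rw [heq n hn c hc k] at h2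
      exact h2
    have hbe : (b n) =ᶠ[nhds c]
        (fun s => ∑ k ∈ Finset.range (N+1),
          (k:ℝ) * ((∑ i ∈ Finset.range (N+1), (p n s).coeff i * (k:ℝ) ^ i) *
            (∑ i ∈ Finset.range (N+1), (p n s).coeff i * (k:ℝ) ^ i)) * (W k * s ^ k)) := by
      refine Filter.eventuallyEq_of_mem hmem fun s hs => ?_
      rw [hb n hn s hs]
      exact Finset.sum_congr rfl fun k _ => by
        rw [heq n hn s hs k]; ring
    have hDb : 2 * TodaAux.ip N w (Polynomial.X * pd n) (Q n)
        + (1/c) * TodaAux.ip N w (Polynomial.X * Q n) (Polynomial.X * Q n)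
        = ∑ k ∈ Finset.range (N+1),
          ((k:ℝ) * ((pd n).eval (k:ℝ) * (p n c).eval (k:ℝ)
              + (p n c).eval (k:ℝ) * (pd n).eval (k:ℝ)) * (W k * c ^ k)
            + (k:ℝ) * ((p n c).eval (k:ℝ) * (p n c).eval (k:ℝ))
              * (W k * ((k:ℝ) * c ^ (k-1)))) := by
      simp only [TodaAux.ip, hQ n hn, hw, Polynomial.eval_mul,
        Polynomial.eval_X, Finset.mul_sum, ← Finset.sum_add_distrib]
      refine Finset.sum_congr rfl fun k _ => ?_
      rw [hck k]
      ring
    have := hFb.congr_of_eventuallyEq hbe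
    rw [← hDb, HS2 n hn1] at this
    exact this
end

section
/- Let y : (0,∞) → ℝ be twice differentiable with y(c) ∉ {0,1} for all c > 0 and suppose y solves the fifth Painlevé equation y'' = (1/(2y) + 1/(y−1))(y')² − y'/c + ((y−1)²/c²)(A·y + B/y) + C·y/c + D·y(y+1)/(y−1) with parameters A = (α−N−1)²/2, B = −(n−N)²/2, C = −(n+α), D = −1/2. Define y_n(c) = [N − n + y·(1 + n + c − α + (α−N−1)y) − c·y'] / (2N(y−1)y) and x_n(c) = [(c·y' + n − N)² − 2(n−N)(n−N+c·y')·y − A_1·y⁴ + A_2·y³ − A_3·y²] / (4cN(y−1)y²), where A_1 = (1+N−α)², A_2 = 2(1+N−α)(1+c+N−α) and A_3 = (1+c+n−α)(1+c−n+2N−α). Then at every c > 0 with x_n(c) + y_n(c) ≠ 0 one has y_n'(c) = x_n + y_n + y_n(N+1+N y_n)(N+1−α+N y_n)/(cN(x_n + y_n)). -/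
set_option maxHeartbeats 4000000 in
/-- If `y` solves the fifth Painlevé equation with parameters
`A = (α-N-1)²/2`, `B = -(n-N)²/2`, `C = -(n+α)`, `D = -1/2`, then the
quantities `xₙ(c)` and `yₙ(c)` built from `y` satisfy
`yₙ' = xₙ + yₙ + yₙ(N+1+Nyₙ)(N+1-α+Nyₙ)/(cN(xₙ+yₙ))`. -/
theorem painleveV_gives_yn_derivative
    (N n : ℕ) (hN : 1 ≤ N) (hn : n ≤ N) (α : ℝ) (hα : α < 1)
    (y y' y'' : ℝ → ℝ)
    (hy1 : ∀ c : ℝ, 0 < c → HasDerivAt y (y' c) c)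
    (hy2 : ∀ c : ℝ, 0 < c → HasDerivAt y' (y'' c) c)
    (hy0 : ∀ c : ℝ, 0 < c → y c ≠ 0)
    (hyone : ∀ c : ℝ, 0 < c → y c ≠ 1)
    (hP5 : ∀ c : ℝ, 0 < c →
      y'' c = (1 / (2 * y c) + 1 / (y c - 1)) * (y' c) ^ 2 - y' c / c
        + ((y c - 1) ^ 2 / c ^ 2)
            * (((α - (N : ℝ) - 1) ^ 2 / 2) * y c + (-(((n : ℝ) - (N : ℝ)) ^ 2 / 2)) / y c)
        + (-((n : ℝ) + α)) * y c / c
        + (-(1 / 2 : ℝ)) * y c * (y c + 1) / (y c - 1))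
    (xn yn : ℝ → ℝ)
    (hyn : ∀ c : ℝ, yn c =
      ((N : ℝ) - (n : ℝ)
        + y c * (1 + (n : ℝ) + c - α + (α - (N : ℝ) - 1) * y c) - c * y' c)
      / (2 * (N : ℝ) * (y c - 1) * y c))
    (hxn : ∀ c : ℝ, xn c =
      ((c * y' c + (n : ℝ) - (N : ℝ)) ^ 2
        - 2 * ((n : ℝ) - (N : ℝ)) * ((n : ℝ) - (N : ℝ) + c * y' c) * y c
        - (1 + (N : ℝ) - α) ^ 2 * (y c) ^ 4
        + 2 * (1 + (N : ℝ) - α) * (1 + c + (N : ℝ) - α) * (y c) ^ 3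
        - (1 + c + (n : ℝ) - α) * (1 + c - (n : ℝ) + 2 * (N : ℝ) - α) * (y c) ^ 2)
      / (4 * c * (N : ℝ) * (y c - 1) * (y c) ^ 2)) :
    ∀ c : ℝ, 0 < c → xn c + yn c ≠ 0 →
      HasDerivAt yn
        (xn c + yn c
          + yn c * ((N : ℝ) + 1 + (N : ℝ) * yn c) * ((N : ℝ) + 1 - α + (N : ℝ) * yn c)
            / (c * (N : ℝ) * (xn c + yn c))) c := by
  intro c hc hX
  have hc0 : c ≠ 0 := ne_of_gt hc
  have hN0 : (N : ℝ) ≠ 0 := Nat.cast_ne_zero.mpr (by omega)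
  have hy0c : y c ≠ 0 := hy0 c hc
  have hym : y c - 1 ≠ 0 := sub_ne_zero.mpr (hyone c hc)
  have hy := hy1 c hc
  have hyd := hy2 c hc
  have hnum : HasDerivAt
      (fun t => (N : ℝ) - (n : ℝ)
        + y t * (1 + (n : ℝ) + t - α + (α - (N : ℝ) - 1) * y t) - t * y' t)
      (y' c * (1 + (n : ℝ) + c - α + (α - (N : ℝ) - 1) * y c)
        + y c * (1 + (α - (N : ℝ) - 1) * y' c) - (1 * y' c + c * y'' c)) c := by
    have hA : HasDerivAt (fun t : ℝ => 1 + (n : ℝ) + t - α + (α - (N : ℝ) - 1) * y t)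
        (1 + (α - (N : ℝ) - 1) * y' c) c :=
      (((hasDerivAt_id' (x := c)).const_add (1 + (n : ℝ))).sub_const α).add
        (hy.const_mul (α - (N : ℝ) - 1))
    exact ((hy.mul hA).const_add ((N : ℝ) - (n : ℝ))).sub ((hasDerivAt_id' (x := c)).mul hyd)
  have hden : HasDerivAt (fun t => 2 * (N : ℝ) * (y t - 1) * y t)
      (2 * (N : ℝ) * y' c * y c + 2 * (N : ℝ) * (y c - 1) * y' c) c :=
    ((hy.sub_const 1).const_mul (2 * (N : ℝ))).mul hy
  have hden0 : 2 * (N : ℝ) * (y c - 1) * y c ≠ 0 :=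
    mul_ne_zero (mul_ne_zero (mul_ne_zero two_ne_zero hN0) hym) hy0c
  have hq := hnum.div hden hden0
  set Dq := ((y' c * (1 + (n : ℝ) + c - α + (α - (N : ℝ) - 1) * y c)
        + y c * (1 + (α - (N : ℝ) - 1) * y' c) - (1 * y' c + c * y'' c))
      * (2 * (N : ℝ) * (y c - 1) * y c)
      - ((N : ℝ) - (n : ℝ)
        + y c * (1 + (n : ℝ) + c - α + (α - (N : ℝ) - 1) * y c) - c * y' c)
        * (2 * (N : ℝ) * y' c * y c + 2 * (N : ℝ) * (y c - 1) * y' c))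
      / (2 * (N : ℝ) * (y c - 1) * y c) ^ 2 with hDq
  have hyn' : HasDerivAt yn Dq c := by
    have hfun : yn = fun t =>
        ((N : ℝ) - (n : ℝ)
          + y t * (1 + (n : ℝ) + t - α + (α - (N : ℝ) - 1) * y t) - t * y' t)
        / (2 * (N : ℝ) * (y t - 1) * y t) := funext hyn
    rw [hfun]
    exact hq
  have hkey : yn c * ((N : ℝ) + 1 + (N : ℝ) * yn c) * ((N : ℝ) + 1 - α + (N : ℝ) * yn c)
      / (c * (N : ℝ) * (xn c + yn c)) = Dq - (xn c + yn c) := by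
    rw [div_eq_iff (mul_ne_zero (mul_ne_zero hc0 hN0) hX)]
    rw [hDq, hxn c, hyn c, hP5 c hc]
    field_simp
    ring
  have hfinal : xn c + yn c
      + yn c * ((N : ℝ) + 1 + (N : ℝ) * yn c) * ((N : ℝ) + 1 - α + (N : ℝ) * yn c)
        / (c * (N : ℝ) * (xn c + yn c)) = Dq := by
    rw [hkey]; ring
  rw [hfinal]
  exact hyn'
end

section
/- Suppose that for every c > 0 the functions satisfy the Toda equations d/dc(a_n²) = (a_n²/c)(b_n − b_{n−1}) and d/dc(b_n) = (a_{n+1}² − a_n²)/c, and the discrete system cN·(x_n + y_n)(x_{n+1} + y_n) = −y_n(N+1+N y_n)(N+1−α+N y_n) and N(N x_n − n)·(x_n + y_n)(x_n + y_{n−1}) = x_n(−N−1+N x_n)(α−N−1+N x_n). Then at every c > 0 with x_n(c) + y_n(c) ≠ 0 and N x_n(c) ≠ n one has x_n' = ((N x_n − n)/c)·(−x_n − y_n + x_n(−N−1+N x_n)(α−N−1+N x_n)/(N(N x_n − n)(x_n + y_n))) and y_n' = x_n + y_n + y_n(N+1+N y_n)(N+1−α+N y_n)/(cN(x_n + y_n)).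 -/
/-- The Toda system together with the discrete system gives the differential
equations for `xₙ(c)` and `yₙ(c)`. -/
theorem toda_and_discrete_give_derivatives
    (N n : ℕ) (hn1 : 1 ≤ n) (hn2 : n + 1 ≤ N) (α : ℝ)
    (an2 an12 bnm1 bn : ℝ → ℝ)
    (xn xn1 ynm1 yn : ℝ → ℝ)
    (hxn : ∀ c : ℝ, xn c = (an2 c / c + (n : ℝ)) / N)
    (hxn1 : ∀ c : ℝ, xn1 c = (an12 c / c + ((n : ℝ) + 1)) / N)
    (hyn : ∀ c : ℝ, yn c = -(bn c + (N : ℝ) + 1 + c - (n : ℝ) - α) / N)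
    (hynm1 : ∀ c : ℝ,
      ynm1 c = -(bnm1 c + (N : ℝ) + 1 + c - ((n : ℝ) - 1) - α) / N)
    (hToda1 : ∀ c : ℝ, 0 < c → HasDerivAt an2 (an2 c / c * (bn c - bnm1 c)) c)
    (hToda2 : ∀ c : ℝ, 0 < c → HasDerivAt bn ((an12 c - an2 c) / c) c)
    (hsys1 : ∀ c : ℝ, 0 < c →
      c * (N : ℝ) * ((xn c + yn c) * (xn1 c + yn c))
        = -(yn c * ((N : ℝ) + 1 + (N : ℝ) * yn c) * ((N : ℝ) + 1 - α + (N : ℝ) * yn c)))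
    (hsys2 : ∀ c : ℝ, 0 < c →
      (N : ℝ) * ((N : ℝ) * xn c - (n : ℝ)) * ((xn c + yn c) * (xn c + ynm1 c))
        = xn c * (-(N : ℝ) - 1 + (N : ℝ) * xn c) * (α - (N : ℝ) - 1 + (N : ℝ) * xn c)) :
    ∀ c : ℝ, 0 < c → xn c + yn c ≠ 0 → (N : ℝ) * xn c ≠ (n : ℝ) →
      HasDerivAt xn
        ((((N : ℝ) * xn c - (n : ℝ)) / c)
          * (-(xn c) - yn c
            + xn c * (-(N : ℝ) - 1 + (N : ℝ) * xn c) * (α - (N : ℝ) - 1 + (N : ℝ) * xn c)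
              / ((N : ℝ) * (((N : ℝ) * xn c - (n : ℝ)) * (xn c + yn c))))) c ∧
      HasDerivAt yn
        (xn c + yn c
          + yn c * ((N : ℝ) + 1 + (N : ℝ) * yn c) * ((N : ℝ) + 1 - α + (N : ℝ) * yn c)
            / (c * (N : ℝ) * (xn c + yn c))) c := by
  intro c hc hxy hNx
  have hc0 : c ≠ 0 := ne_of_gt hc
  have hN0 : 0 < N := lt_of_lt_of_le (Nat.succ_pos n) hn2
  have hN : (N : ℝ) ≠ 0 := Nat.cast_ne_zero.mpr hN0.ne'
  have hNx' : (N : ℝ) * xn c - (n : ℝ) ≠ 0 := sub_ne_zero.mpr hNx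
  have ha : an2 c = c * ((N : ℝ) * xn c - (n : ℝ)) := by
    have := hxn c; field_simp at this; linarith
  have ha1 : an12 c = c * ((N : ℝ) * xn1 c - ((n : ℝ) + 1)) := by
    have := hxn1 c; field_simp at this; linarith
  have hb : bn c = -((N : ℝ) * yn c) - ((N : ℝ) + 1 + c - (n : ℝ) - α) := by
    have := hyn c; field_simp at this; linarith
  have hb1 : bnm1 c = -((N : ℝ) * ynm1 c) - ((N : ℝ) + 1 + c - ((n : ℝ) - 1) - α) := by
    have := hynm1 c; field_simp at this; linarith
  constructor
  · have hx : HasDerivAt xn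
        ((an2 c / c * (bn c - bnm1 c) * c - an2 c * 1) / c ^ 2 / N) c := by
      have h1 := (((hToda1 c hc).div (hasDerivAt_id c) hc0).add_const (n : ℝ)).div_const (N : ℝ)
      have hfe : xn = fun t => (an2 t / t + (n : ℝ)) / N := funext hxn
      rw [hfe]
      simpa using h1
    convert hx using 1
    have key : xn c * (-(N : ℝ) - 1 + (N : ℝ) * xn c) * (α - (N : ℝ) - 1 + (N : ℝ) * xn c)
        / ((N : ℝ) * (((N : ℝ) * xn c - (n : ℝ)) * (xn c + yn c))) = xn c + ynm1 c := by
      rw [← hsys2 c hc]; field_simp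
    rw [key, ha, hb, hb1]
    field_simp
    ring
  · have hy : HasDerivAt yn (-((an12 c - an2 c) / c + 1) / N) c := by
      have h1 := ((((((hToda2 c hc).add_const ((N : ℝ))).add_const 1).add
        (hasDerivAt_id c)).sub_const (n : ℝ)).sub_const α).neg.div_const (N : ℝ)
      have hfe : yn = fun t => -(bn t + (N : ℝ) + 1 + t - (n : ℝ) - α) / N := funext hyn
      rw [hfe]
      exact h1.congr_of_eventuallyEq (Filter.Eventually.of_forall fun t => by
        simp only [Pi.neg_apply, Pi.add_apply, id])
    convert hy using 1
    have key : yn c * ((N : ℝ) + 1 + (N : ℝ) * yn c) * ((N : ℝ) + 1 - α + (N : ℝ) * yn c)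
        / (c * (N : ℝ) * (xn c + yn c)) = -(xn1 c + yn c) := by
      rw [← neg_eq_iff_eq_neg, ← neg_div, ← hsys1 c hc]
      field_simp
    rw [key, ha, ha1]
    field_simp
    ring
end
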